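/- arXiv:0710.4945 — 5 statements merged into one kernel-verified Lean document; each statement's English description precedes it below -/
import Mathlib

section
/- Let M₁, M₂ be homogeneous K-linear subspaces of R = K[x₁,…,x_N] with R = M₁ ⊕ M₂. For i = 1,2 let 𝒟_i be a cone decomposition of M_i that is d_i-standard for some d_i. Then max{deg 𝒟₁, deg 𝒟₂} = max{deg 𝒟₁⁺, deg 𝒟₂⁺}. -/
open MvPolynomial
open scoped Classical

/-- A cone triple `(w, y, h)`: a multi-index `w`, a set `y` of variables, and a
polynomial `h`. -/
abbrev ConeTriple (N : ℕ) (K : Type*) [Field K] :=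
  (Fin N →₀ ℕ) × Finset (Fin N) × MvPolynomial (Fin N) K

/-- The degree `|w| + deg h` of a cone triple `(w, y, h)`. -/
def coneDeg {N : ℕ} {K : Type*} [Field K] (p : ConeTriple N K) : ℕ :=
  (∑ i, p.1 i) + p.2.2.totalDegree

/-- The cone `C(w,y,h)`: the `K`-linear span of all `x^(w+γ)·h` with `γ` supported
on `y`. -/
noncomputable def cone {N : ℕ} {K : Type*} [Field K] (p : ConeTriple N K) :
    Submodule K (MvPolynomial (Fin N) K) :=
  Submodule.span K {q | ∃ γ : Fin N →₀ ℕ, (∀ i ∉ p.2.1, γ i = 0) ∧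
    q = monomial (p.1 + γ) 1 * p.2.2}

/-- A homogeneous `K`-linear subspace of the polynomial ring. -/
def IsHomogeneousSubspace {N : ℕ} {K : Type*} [Field K]
    (M : Submodule K (MvPolynomial (Fin N) K)) : Prop :=
  ∀ f ∈ M, ∀ e : ℕ, homogeneousComponent e f ∈ M

/-- `𝒟` is a cone decomposition of `M`: each triple consists of a nonzero homogeneous
`h`, each cone is contained in `M`, and `M` is the internal direct sum of the cones. -/
def IsConeDecomp {N : ℕ} {K : Type*} [Field K] (𝒟 : Finset (ConeTriple N K))
    (M : Submodule K (MvPolynomial (Fin N) K)) : Prop :=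
  (∀ p ∈ 𝒟, p.2.2 ≠ 0 ∧ ∃ e : ℕ, p.2.2.IsHomogeneous e) ∧
  (∀ p ∈ 𝒟, cone p ≤ M) ∧
  M = (⨆ p ∈ 𝒟, cone p) ∧
  ∀ p ∈ 𝒟, Disjoint (cone p) (⨆ q ∈ 𝒟.erase p, cone q)

/-- `𝒟` is `d`-standard. -/
def IsStandardDecomp {N : ℕ} {K : Type*} [Field K] (d : ℕ)
    (𝒟 : Finset (ConeTriple N K)) : Prop :=
  (∀ p ∈ 𝒟, p.2.1.Nonempty → d ≤ coneDeg p) ∧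
  ∀ p ∈ 𝒟, p.2.1.Nonempty → ∀ d', d ≤ d' → d' ≤ coneDeg p →
    ∃ q ∈ 𝒟, q.2.1.Nonempty ∧ coneDeg q = d' ∧ p.2.1.card ≤ q.2.1.card

/-- The degree of a cone decomposition, as an element of `ℕ ∪ {−∞}`. -/
def decompDeg {N : ℕ} {K : Type*} [Field K] (𝒟 : Finset (ConeTriple N K)) :
    WithBot ℕ :=
  (𝒟.image coneDeg).max

lemma extendDomain_apply_coe {α : Type*} {P : α → Prop} [DecidablePred P]
    (f : Subtype P →₀ ℕ) (x : Subtype P) :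
    Finsupp.extendDomain f x.1 = f x := by
  rw [Finsupp.extendDomain_eq_embDomain_subtype]
  exact Finsupp.embDomain_apply_self _ f x

lemma degree_extendDomain {α : Type*} {P : α → Prop} [DecidablePred P] (f : Subtype P →₀ ℕ) :
    (Finsupp.extendDomain f).degree = f.degree := by
  rw [Finsupp.degree_apply, Finsupp.degree_apply, Finsupp.extendDomain_eq_embDomain_subtype,
    Finsupp.support_embDomain, Finset.sum_map]
  exact Finset.sum_congr rfl fun x _ => Finsupp.embDomain_apply_self _ f x

lemma card_degree_eq (α : Type*) [Fintype α] [DecidableEq α] (k : ℕ) :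
    Nat.card {m : α →₀ ℕ // m.degree = k} = Nat.multichoose (Fintype.card α) k := by
  have e1 : {m : α →₀ ℕ // m.degree = k} ≃ Sym α k :=
    (Equiv.subtypeEquivRight (fun m => Iff.rfl)).trans (Sym.equivNatSum α k).symm
  rw [Nat.card_congr e1, Nat.card_eq_fintype_card, Sym.card_sym_eq_multichoose]

lemma finite_degree_eq (α : Type*) [Fintype α] [DecidableEq α] (k : ℕ) :
    Finite {m : α →₀ ℕ // m.degree = k} :=
  Finite.of_equiv _ ((Equiv.subtypeEquivRight (fun m => Iff.rfl)).trans
    (Sym.equivNatSum α k).symm).symm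


namespace ConeAux
variable {K : Type*} [Field K] {N : ℕ}

lemma sum_univ_eq_degree (γ : Fin N →₀ ℕ) : (∑ i, γ i) = γ.degree :=
  (Finset.sum_subset (Finset.subset_univ _)
    (fun i _ h => Finsupp.notMem_support_iff.mp h)).symm

lemma coneDeg_eq (p : ConeTriple N K) : coneDeg p = p.1.degree + p.2.2.totalDegree := by
  rw [coneDeg, sum_univ_eq_degree]

lemma degree_add (a b : Fin N →₀ ℕ) : (a + b).degree = a.degree + b.degree := by
  rw [← sum_univ_eq_degree, ← sum_univ_eq_degree, ← sum_univ_eq_degree,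
    ← Finset.sum_add_distrib]
  simp [Finsupp.add_apply]

def ConeGamma (p : ConeTriple N K) : Type _ := {γ : Fin N →₀ ℕ // ∀ i ∉ p.2.1, γ i = 0}

noncomputable def coneFam (p : ConeTriple N K) (γ : ConeGamma p) : MvPolynomial (Fin N) K :=
  monomial (p.1 + γ.1) 1 * p.2.2

lemma cone_eq_span (p : ConeTriple N K) :
    cone p = Submodule.span K (Set.range (coneFam p)) := by
  rw [cone]
  congr 1
  ext q
  constructor
  · rintro ⟨γ, h1, h2⟩; exact ⟨⟨γ, h1⟩, h2.symm⟩
  · rintro ⟨⟨γ, h1⟩, h2⟩; exact ⟨γ, h1, h2.symm⟩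

lemma coneFam_linearIndependent {p : ConeTriple N K} (hp : p.2.2 ≠ 0) :
    LinearIndependent K (coneFam p) := by
  have hmono : LinearIndependent K (fun γ : ConeGamma p => (monomial (p.1 + γ.1) 1 :
      MvPolynomial (Fin N) K)) := by
    have h1 := (basisMonomials (Fin N) K).linearIndependent
    have h2 := h1.comp (fun γ : ConeGamma p => p.1 + γ.1) (by
      intro a b hab
      exact Subtype.ext (add_left_cancel hab))
    rw [coe_basisMonomials] at h2
    exact h2
  have hker : LinearMap.ker (LinearMap.mulRight K p.2.2) = ⊥ := by
    rw [LinearMap.ker_eq_bot]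
    intro a b hab
    simp only [LinearMap.mulRight_apply] at hab
    exact mul_right_cancel₀ hp hab
  have := hmono.map' (LinearMap.mulRight K p.2.2) hker
  exact this

lemma coneFam_isHomogeneous {p : ConeTriple N K} (hp : p.2.2 ≠ 0) {n : ℕ}
    (hph : p.2.2.IsHomogeneous n) (γ : ConeGamma p) :
    (coneFam p γ).IsHomogeneous (coneDeg p + γ.1.degree) := by
  have h1 : ((monomial (p.1 + γ.1) (1:K)) : MvPolynomial (Fin N) K).IsHomogeneous
      ((p.1 + γ.1).degree) := isHomogeneous_monomial 1 rfl
  have h2 := h1.mul hph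
  have : (p.1 + γ.1).degree + n = coneDeg p + γ.1.degree := by
    rw [degree_add, coneDeg_eq, hph.totalDegree hp]
    ring
  rwa [this] at h2



lemma finrank_homog_eq_card {ι : Type*} (v : ι → MvPolynomial (Fin N) K)
    (hli : LinearIndependent K v)
    (hsp : ⊤ ≤ Submodule.span K (Set.range v)) (d : ι → ℕ)
    (hb : ∀ i, (v i).IsHomogeneous (d i)) (e : ℕ) :
    Module.finrank K (homogeneousSubmodule (Fin N) K e) = Nat.card {i // d i = e} := by
  let b : Module.Basis ι K (MvPolynomial (Fin N) K) := Module.Basis.mk hli hsp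
  have hbv : ∀ i, b i = v i := fun i => Module.Basis.mk_apply hli hsp i
  set S := homogeneousSubmodule (Fin N) K e with hS
  have hmem : ∀ i : {i // d i = e}, b i.1 ∈ S := fun i => by
    rw [hS, mem_homogeneousSubmodule, hbv]
    obtain ⟨i, rfl⟩ := i; exact hb i
  let u : {i // d i = e} → S := fun i => ⟨b i.1, hmem i⟩
  have hind : LinearIndependent K u := by
    have : LinearIndependent K (fun i : {i // d i = e} => b i.1) :=
      b.linearIndependent.comp Subtype.val Subtype.val_injective
    exact this.of_comp S.subtype
  have hspan : ⊤ ≤ Submodule.span K (Set.range u) := by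
    rintro ⟨x, hx⟩ -
    have hxval : x ∈ Submodule.map S.subtype (Submodule.span K (Set.range u)) := by
      rw [Submodule.map_span]
      have hrepr := b.linearCombination_repr x
      rw [Finsupp.linearCombination_apply, Finsupp.sum] at hrepr
      have hcomp : homogeneousComponent e x = x :=
        (homogeneousComponent_of_mem hx).trans (if_pos rfl)
      have hx2 : x = ∑ i ∈ (b.repr x).support, (b.repr x) i • (homogeneousComponent e (b i)) := by
        conv_lhs => rw [← hcomp, ← hrepr]
        rw [map_sum]
        exact Finset.sum_congr rfl fun i _ => by rw [map_smul]
      rw [hx2]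
      apply Submodule.sum_mem
      intro i _
      have : b i ∈ homogeneousSubmodule (Fin N) K (d i) := by
        rw [mem_homogeneousSubmodule, hbv]; exact hb i
      rw [homogeneousComponent_of_mem this]
      by_cases hie : e = d i
      · rw [if_pos hie]
        apply Submodule.smul_mem
        apply Submodule.subset_span
        exact ⟨u ⟨i, hie.symm⟩, Set.mem_range_self _, rfl⟩
      · rw [if_neg hie]; simp
    obtain ⟨y, hy, hyx⟩ := Submodule.mem_map.mp hxval
    have : y = ⟨x, hx⟩ := Subtype.ext hyx
    rwa [← this]
  let B : Module.Basis {i // d i = e} K S := Module.Basis.mk hind hspan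
  exact Module.finrank_eq_nat_card_basis B

def campType (p : ConeTriple N K) (e : ℕ) : Type _ :=
  {γ : Fin N →₀ ℕ // (∀ i ∉ p.2.1, γ i = 0) ∧ coneDeg p + γ.degree = e}

noncomputable def camp (p : ConeTriple N K) (e : ℕ) : ℕ := Nat.card (campType p e)

/-- equivalence with finsupps on `y` of degree `e - c`, when `c ≤ e`. -/
noncomputable def campEquiv (p : ConeTriple N K) (e : ℕ) (hce : coneDeg p ≤ e) :
    campType p e ≃ {δ : {i // i ∈ p.2.1} →₀ ℕ // δ.degree = e - coneDeg p} where
  toFun γ := ⟨Finsupp.subtypeDomain _ γ.1, by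
    have hsupp : ∀ a ∈ γ.1.support, a ∈ p.2.1 := fun a ha => by
      by_contra hna
      exact Finsupp.mem_support_iff.mp ha (γ.2.1 a hna)
    have h1 := degree_extendDomain (Finsupp.subtypeDomain (· ∈ p.2.1) γ.1)
    rw [Finsupp.extendDomain_subtypeDomain _ hsupp] at h1
    have := γ.2.2
    omega⟩
  invFun δ := ⟨Finsupp.extendDomain δ.1, fun i hi => by
    simp [Finsupp.extendDomain_apply, hi], by
    rw [degree_extendDomain, δ.2]; omega⟩
  left_inv γ := Subtype.ext (Finsupp.extendDomain_subtypeDomain _ (fun a ha => by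
    by_contra hna
    exact Finsupp.mem_support_iff.mp ha (γ.2.1 a hna)))
  right_inv δ := Subtype.ext (Finsupp.subtypeDomain_extendDomain _)

lemma finite_campType (p : ConeTriple N K) (e : ℕ) : Finite (campType p e) := by
  by_cases hce : coneDeg p ≤ e
  · exact Finite.of_equiv _ ((campEquiv p e hce).trans
      ((Equiv.subtypeEquivRight (fun m => Iff.rfl)).trans
        (Sym.equivNatSum _ (e - coneDeg p)).symm)).symm
  · haveI : IsEmpty (campType p e) :=
      ⟨fun γ => hce (le_trans (Nat.le_add_right _ _) (le_of_eq γ.2.2))⟩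
    exact Finite.of_subsingleton

lemma camp_plus (p : ConeTriple N K) (e : ℕ) (hce : coneDeg p ≤ e) :
    camp p e = Nat.multichoose p.2.1.card (e - coneDeg p) := by
  rw [camp, Nat.card_congr (campEquiv p e hce), card_degree_eq, Fintype.card_coe]

lemma camp_empty (p : ConeTriple N K) (hy : p.2.1 = ∅) (e : ℕ) :
    camp p e = if coneDeg p = e then 1 else 0 := by
  have hforced : ∀ γ : campType p e, γ.1 = 0 := fun γ => by
    ext i
    exact γ.2.1 i (by simp [hy])
  split_ifs with h
  · have : Unique (campType p e) := by
      refine ⟨⟨⟨0, fun i _ => rfl, by simpa using h⟩⟩, fun γ => ?_⟩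
      exact Subtype.ext (hforced γ)
    exact Nat.card_unique
  · have : IsEmpty (campType p e) := ⟨fun γ => by
      have h0 := hforced γ
      have := γ.2.2
      rw [h0] at this
      simp [map_zero] at this
      exact h this⟩
    exact Nat.card_of_isEmpty

set_option maxHeartbeats 2000000 in
theorem count_identity (𝒟 : Finset (ConeTriple N K))
    (hhom : ∀ p ∈ 𝒟, p.2.2 ≠ 0 ∧ ∃ n, p.2.2.IsHomogeneous n)
    (htop : (⨆ p ∈ 𝒟, cone p) = ⊤)
    (hdis : ∀ p ∈ 𝒟, Disjoint (cone p) (⨆ q ∈ 𝒟.erase p, cone q)) (e : ℕ) :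
    Nat.multichoose N e = ∑ p ∈ 𝒟, camp p e := by
  classical
  -- the big linearly independent family
  have hind : LinearIndependent K
      (fun ji : (p : {x // x ∈ 𝒟}) × ConeGamma (p.1 : ConeTriple N K) =>
        coneFam ji.1.1 ji.2) := by
    apply linearIndependent_iUnion_finite
      (f := fun (p : {x // x ∈ 𝒟}) (γ : ConeGamma (p.1 : ConeTriple N K)) => coneFam p.1 γ)
    · exact fun p => coneFam_linearIndependent (hhom p.1 p.2).1
    · intro i t _ hit
      rw [← cone_eq_span]
      refine Disjoint.mono_right ?_ (hdis i.1 i.2)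
      refine iSup₂_le fun j hj => ?_
      rw [← cone_eq_span]
      have hmem : (j.1 : ConeTriple N K) ∈ 𝒟.erase i.1 :=
        Finset.mem_erase.mpr ⟨fun h => hit (Subtype.ext h ▸ hj), j.2⟩
      exact le_iSup₂ (f := fun q (_ : q ∈ 𝒟.erase i.1) => cone q) j.1 hmem
  have hspan : ⊤ ≤ Submodule.span K
      (Set.range (fun ji : (p : {x // x ∈ 𝒟}) × ConeGamma (p.1 : ConeTriple N K) =>
        coneFam ji.1.1 ji.2)) := by
    rw [Set.range_sigma_eq_iUnion_range, Submodule.span_iUnion]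
    simp only [← cone_eq_span]
    rw [← htop]
    refine iSup₂_le fun p hp => ?_
    exact le_iSup_of_le ⟨p, hp⟩ le_rfl
  have hB : ∀ ji : (p : {x // x ∈ 𝒟}) × ConeGamma (p.1 : ConeTriple N K),
      (coneFam ji.1.1 ji.2).IsHomogeneous (coneDeg ji.1.1 + ji.2.1.degree) := fun ji => by
    obtain ⟨hne, n, hn⟩ := hhom ji.1.1 ji.1.2
    exact coneFam_isHomogeneous hne hn ji.2
  have h1 := finrank_homog_eq_card _ hind hspan _ hB e
  have h2 := finrank_homog_eq_card (fun m : Fin N →₀ ℕ => (monomial m 1 : MvPolynomial (Fin N) K))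
    (by have := (basisMonomials (Fin N) K).linearIndependent
        rwa [coe_basisMonomials] at this)
    (by have := (basisMonomials (Fin N) K).span_eq
        rw [coe_basisMonomials] at this
        rw [this])
    (fun m => m.degree)
    (fun m => isHomogeneous_monomial 1 rfl) e
  rw [h1] at h2
  -- h2 : Nat.card {m // m.degree = e} = Nat.card {ji // dg ji = e}
  rw [card_degree_eq, Fintype.card_fin] at h2
  rw [← h2]
  -- now compute the RHS card as a sum
  have E : {ji : (p : {x // x ∈ 𝒟}) × ConeGamma (p.1 : ConeTriple N K) //
      coneDeg ji.1.1 + ji.2.1.degree = e} ≃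
      Σ p : {x // x ∈ 𝒟}, campType (p.1 : ConeTriple N K) e :=
    { toFun := fun x => ⟨x.1.1, ⟨x.1.2.1, x.1.2.2, x.2⟩⟩
      invFun := fun x => ⟨⟨x.1, ⟨x.2.1, x.2.2.1⟩⟩, x.2.2.2⟩
      left_inv := fun x => rfl
      right_inv := fun x => rfl }
  rw [Nat.card_congr E]
  haveI : ∀ p : {x // x ∈ 𝒟}, Finite (campType (p.1 : ConeTriple N K) e) :=
    fun p => finite_campType _ e
  haveI : ∀ p : {x // x ∈ 𝒟}, Fintype (campType (p.1 : ConeTriple N K) e) :=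
    fun p => Fintype.ofFinite _
  rw [Nat.card_eq_fintype_card, Fintype.card_sigma]
  rw [← Finset.sum_coe_sort 𝒟 (fun p => camp p e)]
  exact Finset.sum_congr rfl fun p _ => (Nat.card_eq_fintype_card).symm

end ConeAux

noncomputable def chPoly (c s : ℕ) : Polynomial ℚ :=
  Polynomial.C (((s-1).factorial : ℚ))⁻¹ *
    (ascPochhammer ℚ (s-1)).comp (Polynomial.X - Polynomial.C (c:ℚ) + 1)

lemma chPoly_eval (c s e : ℕ) (hs : 1 ≤ s) (hce : c ≤ e) :
    (chPoly c s).eval (e : ℚ) = (Nat.multichoose s (e - c) : ℚ) := by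
  set k := e - c with hk
  have harg : (e : ℚ) - (c : ℚ) + 1 = ((k + 1 : ℕ) : ℚ) := by
    push_cast [hk, Nat.cast_sub hce]; ring
  rw [chPoly, Polynomial.eval_mul, Polynomial.eval_C, Polynomial.eval_comp, Polynomial.eval_add,
    Polynomial.eval_sub, Polynomial.eval_X, Polynomial.eval_C, Polynomial.eval_one, harg,
    ← ascPochhammer_eval_cast, ascPochhammer_nat_eq_ascFactorial,
    Nat.ascFactorial_eq_factorial_mul_choose]
  have hchoose : (k + (s-1)).choose (s-1) = Nat.multichoose s k := by
    rw [Nat.multichoose_eq]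
    have h1 : s + k - 1 = k + (s - 1) := by omega
    rw [h1, Nat.add_comm k (s-1), Nat.choose_symm_add, Nat.add_comm]
  rw [← hchoose]
  push_cast
  rw [← mul_assoc, inv_mul_cancel₀ (by exact_mod_cast Nat.factorial_ne_zero (s-1)), one_mul]


namespace ConeAux
variable {K : Type*} [Field K] {N : ℕ}

lemma disj_union_aux {M₁ M₂ : Submodule K (MvPolynomial (Fin N) K)}
    (hdisj : Disjoint M₁ M₂) {𝒟₁ 𝒟₂ : Finset (ConeTriple N K)}
    (h₁ : IsConeDecomp 𝒟₁ M₁) (h₂ : IsConeDecomp 𝒟₂ M₂)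
    {p : ConeTriple N K} (hp : p ∈ 𝒟₁) :
    Disjoint (cone p) (⨆ q ∈ (𝒟₁ ∪ 𝒟₂).erase p, cone q) := by
  obtain ⟨-, hle₁, hM₁, hdis₁⟩ := h₁
  obtain ⟨-, hle₂, hM₂, -⟩ := h₂
  have hsup_le : (⨆ q ∈ (𝒟₁ ∪ 𝒟₂).erase p, cone q) ≤ (⨆ q ∈ 𝒟₁.erase p, cone q) ⊔ M₂ := by
    refine iSup₂_le fun q hq => ?_
    rcases Finset.mem_union.mp (Finset.mem_of_mem_erase hq) with h | h
    · exact le_sup_of_le_left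
        (le_iSup₂_of_le q (Finset.mem_erase.mpr ⟨Finset.ne_of_mem_erase hq, h⟩) le_rfl)
    · exact le_sup_of_le_right (hle₂ q h)
  refine Disjoint.mono_right hsup_le ?_
  rw [Submodule.disjoint_def]
  intro x hx hx2
  obtain ⟨a, ha, b, hb, rfl⟩ := Submodule.mem_sup.mp hx2
  have haM₁ : a ∈ M₁ := by
    have hA : (⨆ q ∈ 𝒟₁.erase p, cone q) ≤ M₁ :=
      iSup₂_le fun q hq => hle₁ q (Finset.mem_of_mem_erase hq)
    exact hA ha
  have hxM₁ : a + b ∈ M₁ := hle₁ p hp hx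
  have hbM₁ : b ∈ M₁ := by
    have hba : b = (a + b) - a := by abel
    rw [hba]; exact Submodule.sub_mem _ hxM₁ haM₁
  have hb0 : b = 0 := Submodule.disjoint_def.mp hdisj b hbM₁ hb
  rw [hb0, add_zero] at hx ⊢
  exact Submodule.disjoint_def.mp (hdis₁ p hp) a hx ha

end ConeAux

open ConeAux

theorem max_degree_of_complementary_decompositions {K : Type*} [Field K]
    {N : ℕ} (hN : 1 ≤ N)
    (M₁ M₂ : Submodule K (MvPolynomial (Fin N) K))
    (hM₁ : IsHomogeneousSubspace M₁) (hM₂ : IsHomogeneousSubspace M₂)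
    (hsum : M₁ ⊔ M₂ = ⊤) (hdisj : Disjoint M₁ M₂)
    (𝒟₁ 𝒟₂ : Finset (ConeTriple N K))
    (h₁ : IsConeDecomp 𝒟₁ M₁) (h₂ : IsConeDecomp 𝒟₂ M₂)
    (d₁ d₂ : ℕ) (hs₁ : IsStandardDecomp d₁ 𝒟₁) (hs₂ : IsStandardDecomp d₂ 𝒟₂) :
    max (decompDeg 𝒟₁) (decompDeg 𝒟₂) =
      max (decompDeg (𝒟₁.filter fun p => p.2.1.Nonempty))
        (decompDeg (𝒟₂.filter fun p => p.2.1.Nonempty)) := by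
  classical
  have hBle : max (decompDeg (𝒟₁.filter fun p => p.2.1.Nonempty))
      (decompDeg (𝒟₂.filter fun p => p.2.1.Nonempty)) ≤ max (decompDeg 𝒟₁) (decompDeg 𝒟₂) :=
    max_le_max (Finset.max_mono (Finset.image_subset_image (Finset.filter_subset _ _)))
      (Finset.max_mono (Finset.image_subset_image (Finset.filter_subset _ _)))
  by_contra hne
  have hlt : max (decompDeg (𝒟₁.filter fun p => p.2.1.Nonempty))
      (decompDeg (𝒟₂.filter fun p => p.2.1.Nonempty)) < max (decompDeg 𝒟₁) (decompDeg 𝒟₂) :=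
    hBle.lt_of_ne (fun h => hne h.symm)
  have hA : max (decompDeg 𝒟₁) (decompDeg 𝒟₂) = ((𝒟₁ ∪ 𝒟₂).image coneDeg).max := by
    rw [decompDeg, decompDeg, Finset.image_union, Finset.max_union]
  have hB : max (decompDeg (𝒟₁.filter fun p => p.2.1.Nonempty))
      (decompDeg (𝒟₂.filter fun p => p.2.1.Nonempty))
      = (((𝒟₁ ∪ 𝒟₂).filter fun p => p.2.1.Nonempty).image coneDeg).max := by
    rw [decompDeg, decompDeg, Finset.filter_union, Finset.image_union, Finset.max_union]
  rw [hA, hB] at hlt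
  obtain ⟨D₀, hD₀, hBltD₀⟩ := WithBot.lt_iff_exists_coe.mp hlt
  obtain ⟨p₀, hp₀D, hp₀deg⟩ := Finset.mem_image.mp (Finset.mem_of_max hD₀)
  have hle : ∀ p ∈ 𝒟₁ ∪ 𝒟₂, coneDeg p ≤ D₀ := fun p hp => by
    have h1 := (Finset.le_max (Finset.mem_image_of_mem coneDeg hp)).trans_eq hD₀
    exact_mod_cast h1
  have hplt : ∀ p ∈ (𝒟₁ ∪ 𝒟₂).filter (fun p => p.2.1.Nonempty), coneDeg p < D₀ := fun p hp => by
    have h1 := (Finset.le_max (Finset.mem_image_of_mem coneDeg hp)).trans_lt hBltD₀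
    exact_mod_cast h1
  have hp₀empty : ¬ p₀.2.1.Nonempty := fun hne' =>
    lt_irrefl D₀ (hp₀deg ▸ hplt p₀ (Finset.mem_filter.mpr ⟨hp₀D, hne'⟩))
  -- union is a cone decomposition of ⊤
  have hhomU : ∀ p ∈ 𝒟₁ ∪ 𝒟₂, p.2.2 ≠ 0 ∧ ∃ n, p.2.2.IsHomogeneous n := fun p hp => by
    rcases Finset.mem_union.mp hp with h | h
    · exact h₁.1 p h
    · exact h₂.1 p h
  have htopU : (⨆ p ∈ 𝒟₁ ∪ 𝒟₂, cone p) = ⊤ := by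
    rw [← Finset.sup_eq_iSup, Finset.sup_union, Finset.sup_eq_iSup, Finset.sup_eq_iSup,
      ← h₁.2.2.1, ← h₂.2.2.1]
    exact hsum
  have hdisU : ∀ p ∈ 𝒟₁ ∪ 𝒟₂, Disjoint (cone p) (⨆ q ∈ (𝒟₁ ∪ 𝒟₂).erase p, cone q) :=
    fun p hp => by
    rcases Finset.mem_union.mp hp with h | h
    · exact disj_union_aux hdisj h₁ h₂ h
    · have := disj_union_aux hdisj.symm h₂ h₁ h
      rwa [Finset.union_comm] at this
  have hcount := count_identity (𝒟₁ ∪ 𝒟₂) hhomU htopU hdisU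
  set Plus := (𝒟₁ ∪ 𝒟₂).filter (fun p => p.2.1.Nonempty) with hPlusDef
  have key : ∀ e : ℕ, D₀ ≤ e →
      (Nat.multichoose N e : ℚ) =
        ((((𝒟₁ ∪ 𝒟₂).filter (fun p => ¬ p.2.1.Nonempty ∧ coneDeg p = e)).card : ℚ))
          + ∑ p ∈ Plus, (Nat.multichoose p.2.1.card (e - coneDeg p) : ℚ) := by
    intro e he
    have h0 := hcount e
    rw [← Finset.sum_filter_add_sum_filter_not (𝒟₁ ∪ 𝒟₂) (fun p => p.2.1.Nonempty)] at h0
    have hplus : ∑ p ∈ Plus, camp p e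
        = ∑ p ∈ Plus, Nat.multichoose p.2.1.card (e - coneDeg p) :=
      Finset.sum_congr rfl fun p hp => camp_plus p e (le_of_lt (lt_of_lt_of_le (hplt p hp) he))
    have hnon : ∑ p ∈ (𝒟₁ ∪ 𝒟₂).filter (fun p => ¬ p.2.1.Nonempty), camp p e
        = ((𝒟₁ ∪ 𝒟₂).filter (fun p => ¬ p.2.1.Nonempty ∧ coneDeg p = e)).card := by
      rw [← Finset.filter_filter, Finset.card_filter]
      exact Finset.sum_congr rfl fun p hp =>
        camp_empty p (Finset.not_nonempty_iff_eq_empty.mp (Finset.mem_filter.mp hp).2) e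
    rw [hplus, hnon] at h0
    have hq := congrArg (fun n : ℕ => (n : ℚ)) h0
    push_cast at hq ⊢
    linarith
  set PP := chPoly 0 N - ∑ p ∈ Plus, chPoly (coneDeg p) p.2.1.card with hPPdef
  have heval : ∀ e : ℕ, D₀ ≤ e → PP.eval (e : ℚ)
      = ((((𝒟₁ ∪ 𝒟₂).filter (fun p => ¬ p.2.1.Nonempty ∧ coneDeg p = e)).card : ℚ)) := by
    intro e he
    rw [hPPdef, Polynomial.eval_sub, Polynomial.eval_finset_sum]
    have hfull : (chPoly 0 N).eval (e : ℚ) = (Nat.multichoose N e : ℚ) := by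
      have := chPoly_eval 0 N e hN (Nat.zero_le e)
      simpa using this
    have hterm : ∀ p ∈ Plus, (chPoly (coneDeg p) p.2.1.card).eval (e : ℚ)
        = (Nat.multichoose p.2.1.card (e - coneDeg p) : ℚ) := fun p hp =>
      chPoly_eval _ _ _ (Finset.card_pos.mpr (Finset.mem_filter.mp hp).2)
        ((hplt p hp).le.trans he)
    rw [hfull, Finset.sum_congr rfl hterm]
    have := key e he
    linarith
  have hroots : ∀ e : ℕ, D₀ < e → PP.IsRoot (e : ℚ) := fun e he => by
    rw [Polynomial.IsRoot, heval e he.le]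
    norm_cast
    refine Finset.card_eq_zero.mpr (Finset.filter_eq_empty_iff.mpr ?_)
    rintro p hp ⟨-, hdeg⟩
    have := hle p hp
    omega
  have hPP0 : PP = 0 := by
    apply Polynomial.eq_zero_of_infinite_isRoot
    have hinf : ((fun n : ℕ => (n : ℚ)) '' (Set.Ioi D₀)).Infinite :=
      (Set.Ioi_infinite D₀).image (Nat.cast_injective.injOn)
    refine hinf.mono ?_
    rintro x ⟨n, hn, rfl⟩
    exact hroots n hn
  have hcontr := heval D₀ le_rfl
  rw [hPP0, Polynomial.eval_zero] at hcontr
  have hcard : (((𝒟₁ ∪ 𝒟₂).filter (fun p => ¬ p.2.1.Nonempty ∧ coneDeg p = D₀)).card) = 0 := by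
    exact_mod_cast hcontr.symm
  have hp₀mem : p₀ ∈ (𝒟₁ ∪ 𝒟₂).filter (fun p => ¬ p.2.1.Nonempty ∧ coneDeg p = D₀) :=
    Finset.mem_filter.mpr ⟨hp₀D, hp₀empty, hp₀deg⟩
  rw [Finset.card_eq_zero] at hcard
  rw [hcard] at hp₀mem
  exact Finset.notMem_empty p₀ hp₀mem
end

section
/- Let M be a homogeneous K-linear subspace of R = K[x₁,…,x_N]. If M admits a d-standard cone decomposition, then for every d′ ≥ d, M admits a d′-standard cone decomposition. -/
open MvPolynomial
open scoped Classical

section Aux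
variable {K : Type*} [Field K] {N : ℕ}

/-- The set of exponents of the monomial generators of a cone. -/
def ESet (p : ConeTriple N K) : Set (Fin N →₀ ℕ) :=
  {m | ∃ γ : Fin N →₀ ℕ, (∀ i ∉ p.2.1, γ i = 0) ∧ m = p.1 + γ}

lemma cone_eq_span (p : ConeTriple N K) :
    cone p = Submodule.span K
      ((fun m => (monomial m 1 : MvPolynomial (Fin N) K) * p.2.2) '' ESet p) := by
  unfold cone ESet
  congr 1
  ext q
  constructor
  · rintro ⟨γ, hγ, rfl⟩; exact ⟨p.1 + γ, ⟨γ, hγ, rfl⟩, rfl⟩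
  · rintro ⟨m, ⟨γ, hγ, rfl⟩, rfl⟩; exact ⟨γ, hγ, rfl⟩

lemma li_mul {h : MvPolynomial (Fin N) K} (hh : h ≠ 0) :
    LinearIndependent K (fun m : Fin N →₀ ℕ => (monomial m 1 : MvPolynomial (Fin N) K) * h) := by
  have hb := (MvPolynomial.basisMonomials (Fin N) K).linearIndependent
  have key : (fun m : Fin N →₀ ℕ => (monomial m 1 : MvPolynomial (Fin N) K) * h)
      = ⇑(LinearMap.mulRight K h) ∘ ⇑(MvPolynomial.basisMonomials (Fin N) K) := by
    funext m
    simp [MvPolynomial.coe_basisMonomials]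
  rw [key]
  exact hb.map' (LinearMap.mulRight K h)
    (LinearMap.ker_eq_bot.mpr (mul_left_injective₀ hh))

lemma cone_disjoint_of_disjoint_ESet {h : MvPolynomial (Fin N) K} (hh : h ≠ 0)
    (F : Finset (ConeTriple N K)) (hF : ∀ r ∈ F, r.2.2 = h)
    (p : ConeTriple N K) (hp : p.2.2 = h)
    (hdisj : ∀ r ∈ F, Disjoint (ESet p) (ESet r)) :
    Disjoint (cone p) (⨆ r ∈ F, cone r) := by
  set v : (Fin N →₀ ℕ) → MvPolynomial (Fin N) K := fun m => monomial m 1 * h with hv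
  have h1 : cone p = Submodule.span K (v '' ESet p) := by rw [cone_eq_span, hp]
  have h2 : (⨆ r ∈ F, cone r) ≤ Submodule.span K (v '' ⋃ r ∈ F, ESet r) := by
    refine iSup₂_le fun r hr => ?_
    rw [cone_eq_span, hF r hr]
    exact Submodule.span_mono (Set.image_mono (Set.subset_biUnion_of_mem hr))
  refine Disjoint.mono_right h2 ?_
  rw [h1]
  exact (li_mul hh).disjoint_span_image (by
    rw [Set.disjoint_iUnion₂_right]; exact hdisj)

/-- refinement of a cone: the degree-0 part plus one piece per variable of `y`. -/
noncomputable def pieceTriples (p : ConeTriple N K) : Finset (ConeTriple N K) :=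
  insert (p.1, (∅ : Finset (Fin N)), p.2.2)
    (p.2.1.image fun j => (p.1 + Finsupp.single j 1, p.2.1.filter (fun i => j ≤ i), p.2.2))

lemma piece_snd {p r : ConeTriple N K} (hr : r ∈ pieceTriples p) : r.2.2 = p.2.2 := by
  rcases Finset.mem_insert.mp hr with h | h
  · rw [h]
  · obtain ⟨j, _, rfl⟩ := Finset.mem_image.mp h; rfl

lemma piece_cone_le {p r : ConeTriple N K} (hr : r ∈ pieceTriples p) : cone r ≤ cone p := by
  rcases Finset.mem_insert.mp hr with h | h
  · subst h
    refine Submodule.span_le.mpr ?_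
    rintro q ⟨γ, hγ, rfl⟩
    have hγ0 : γ = 0 := Finsupp.ext fun i => hγ i (Finset.notMem_empty i)
    exact Submodule.subset_span ⟨γ, fun i _ => by simp [hγ0], rfl⟩
  · obtain ⟨j, hj, rfl⟩ := Finset.mem_image.mp h
    refine Submodule.span_le.mpr ?_
    rintro q ⟨γ, hγ, rfl⟩
    refine Submodule.subset_span ⟨Finsupp.single j 1 + γ, fun i hi => ?_, by rw [add_assoc]⟩
    have hij : i ≠ j := fun e => hi (e ▸ hj)
    have : γ i = 0 := by
      refine hγ i fun hmem => hi ?_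
      exact (Finset.mem_filter.mp hmem).1
    simp [Finsupp.single_apply, hij.symm, this]

lemma cone_eq_sup_pieces (p : ConeTriple N K) :
    cone p = ⨆ r ∈ pieceTriples p, cone r := by
  refine le_antisymm ?_ (iSup₂_le fun r hr => piece_cone_le hr)
  refine Submodule.span_le.mpr ?_
  rintro q ⟨γ, hγ, rfl⟩
  by_cases h0 : γ = 0
  · subst h0
    have hmem : (p.1, (∅ : Finset (Fin N)), p.2.2) ∈ pieceTriples p := Finset.mem_insert_self _ _
    exact Submodule.mem_iSup_of_mem _ (Submodule.mem_iSup_of_mem hmem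
      (Submodule.subset_span ⟨0, fun i _ => rfl, rfl⟩))
  · have hsupp : γ.support.Nonempty := Finsupp.support_nonempty_iff.mpr h0
    set j := γ.support.min' hsupp with hj
    have hjs : j ∈ γ.support := γ.support.min'_mem hsupp
    have hjy : j ∈ p.2.1 := by
      by_contra hc
      exact (Finsupp.mem_support_iff.mp hjs) (hγ j hc)
    have hmem : (p.1 + Finsupp.single j 1, p.2.1.filter (fun i => j ≤ i), p.2.2)
        ∈ pieceTriples p :=
      Finset.mem_insert_of_mem (Finset.mem_image.mpr ⟨j, hjy, rfl⟩)
    have hγj : 1 ≤ γ j := Nat.one_le_iff_ne_zero.mpr (Finsupp.mem_support_iff.mp hjs)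
    have hγeq : Finsupp.single j 1 + (γ - Finsupp.single j 1) = γ := by
      ext i
      rw [Finsupp.add_apply, Finsupp.tsub_apply]
      rcases eq_or_ne i j with rfl | hij
      · rw [Finsupp.single_eq_same]
        omega
      · simp [Finsupp.single_apply, Ne.symm hij]
    refine Submodule.mem_iSup_of_mem _ (Submodule.mem_iSup_of_mem hmem
      (Submodule.subset_span ⟨γ - Finsupp.single j 1, ?_, ?_⟩))
    · intro i hi
      rw [Finsupp.tsub_apply]
      rcases eq_or_ne i j with rfl | hij
      · exact absurd (Finset.mem_filter.mpr ⟨hjy, le_refl j⟩) hi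
      · have : γ i = 0 := by
          by_contra hc
          have hiy : i ∈ p.2.1 := by
            by_contra hcy; exact hc (hγ i hcy)
          have hji : j ≤ i := Finset.min'_le _ _ (Finsupp.mem_support_iff.mpr hc)
          exact hi (Finset.mem_filter.mpr ⟨hiy, hji⟩)
        simp [this]
    · rw [add_assoc, hγeq]

lemma mem_ESet_base {p : ConeTriple N K} {m : Fin N →₀ ℕ}
    (hm : m ∈ ESet (p.1, (∅ : Finset (Fin N)), p.2.2)) : m = p.1 := by
  obtain ⟨γ, hγ, rfl⟩ := hm
  have : γ = 0 := Finsupp.ext fun i => hγ i (Finset.notMem_empty i)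
  simp [this]

lemma mem_ESet_piece {p : ConeTriple N K} {j : Fin N} {m : Fin N →₀ ℕ}
    (hm : m ∈ ESet (p.1 + Finsupp.single j 1, p.2.1.filter (fun i => j ≤ i), p.2.2)) :
    p.1 j < m j ∧ ∀ i, i < j → m i = p.1 i := by
  obtain ⟨γ, hγ, rfl⟩ := hm
  constructor
  · simp [Finsupp.add_apply, Finsupp.single_apply]
    omega
  · intro i hi
    have h1 : γ i = 0 := by
      refine hγ i fun hmem => ?_
      exact absurd (Finset.mem_filter.mp hmem).2 (not_le.mpr hi)
    have h2 : i ≠ j := ne_of_lt hi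
    simp [Finsupp.add_apply, Finsupp.single_apply, h1, Ne.symm h2]

lemma piece_ESet_disjoint {p : ConeTriple N K} {r s : ConeTriple N K}
    (hr : r ∈ pieceTriples p) (hs : s ∈ pieceTriples p) (hrs : r ≠ s) :
    Disjoint (ESet r) (ESet s) := by
  rw [Set.disjoint_left]
  intro m hmr hms
  rcases Finset.mem_insert.mp hr with h1 | h1 <;> rcases Finset.mem_insert.mp hs with h2 | h2
  · exact hrs (h1.trans h2.symm)
  · obtain ⟨j, hj, rfl⟩ := Finset.mem_image.mp h2
    subst h1
    have e1 := mem_ESet_base hmr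
    have e2 := (mem_ESet_piece hms).1
    rw [e1] at e2
    exact lt_irrefl _ e2
  · obtain ⟨j, hj, rfl⟩ := Finset.mem_image.mp h1
    subst h2
    have e1 := mem_ESet_base hms
    have e2 := (mem_ESet_piece hmr).1
    rw [e1] at e2
    exact lt_irrefl _ e2
  · obtain ⟨j, hj, rfl⟩ := Finset.mem_image.mp h1
    obtain ⟨j', hj', h2'⟩ := Finset.mem_image.mp h2
    have e1 := mem_ESet_piece hmr
    have e2 : p.1 j' < m j' ∧ ∀ i, i < j' → m i = p.1 i := by
      rw [← h2'] at hms; exact mem_ESet_piece (h2' ▸ hms)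
    rcases lt_trichotomy j j' with hlt | heq | hgt
    · have := e2.2 j hlt
      rw [this] at e1
      exact lt_irrefl _ e1.1
    · exact hrs (by rw [← h2', heq])
    · have := e1.2 j' hgt
      rw [this] at e2
      exact lt_irrefl _ e2.1

end Aux

section Aux2
variable {K : Type*} [Field K] {N : ℕ}

lemma le_sup_cone {F : Finset (ConeTriple N K)} {r : ConeTriple N K} (hr : r ∈ F) :
    cone r ≤ ⨆ q ∈ F, cone q :=
  le_iSup₂ (f := fun q (_ : q ∈ F) => cone q) r hr

lemma piece_cone_disjoint {p : ConeTriple N K} (hh : p.2.2 ≠ 0) {r : ConeTriple N K}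
    (hr : r ∈ pieceTriples p) :
    Disjoint (cone r) (⨆ s ∈ (pieceTriples p).erase r, cone s) := by
  refine cone_disjoint_of_disjoint_ESet hh _
    (fun s hs => piece_snd (Finset.mem_of_mem_erase hs)) r (piece_snd hr)
    (fun s hs => piece_ESet_disjoint hr (Finset.mem_of_mem_erase hs)
      (Finset.ne_of_mem_erase hs).symm)

lemma disjoint_sup_of {R' : Type*} [AddCommGroup R'] [Module K R'] {P a b c : Submodule K R'}
    (ha : a ≤ P) (hb : b ≤ P) (hab : Disjoint a b) (hPc : Disjoint P c) :
    Disjoint a (b ⊔ c) := by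
  rw [Submodule.disjoint_def] at hab hPc ⊢
  intro x hxa hxbc
  obtain ⟨y, hy, z, hz, hyz⟩ := Submodule.mem_sup.mp hxbc
  have hzP : z ∈ P := by
    have hxy : x - y ∈ P := Submodule.sub_mem _ (ha hxa) (hb hy)
    rwa [← hyz, add_sub_cancel_left] at hxy
  have hz0 : z = 0 := hPc z hzP hz
  have hxy : x = y := by rw [← hyz, hz0, add_zero]
  exact hab x hxa (hxy ▸ hy)

lemma coneDeg_piece (p : ConeTriple N K) (j : Fin N) :
    coneDeg ((p.1 + Finsupp.single j 1, p.2.1.filter (fun i => j ≤ i), p.2.2) : ConeTriple N K)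
      = coneDeg p + 1 := by
  unfold coneDeg
  simp only [Finsupp.add_apply]
  rw [Finset.sum_add_distrib]
  have hs : ∑ i : Fin N, (Finsupp.single j 1 : Fin N →₀ ℕ) i = 1 := by
    simp [Finsupp.single_apply, Finset.sum_ite_eq]
  rw [hs]
  ring

end Aux2

section Step
variable {K : Type*} [Field K] {N : ℕ}

lemma step_decomp {M : Submodule K (MvPolynomial (Fin N) K)} (e : ℕ)
    {𝒟 : Finset (ConeTriple N K)} (hdec : IsConeDecomp 𝒟 M) (hstd : IsStandardDecomp e 𝒟) :
    ∃ 𝒟' : Finset (ConeTriple N K), IsConeDecomp 𝒟' M ∧ IsStandardDecomp (e + 1) 𝒟' := by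
  classical
  obtain ⟨hne, hle, hsup, hdisj⟩ := hdec
  obtain ⟨hst1, hst2⟩ := hstd
  set S : Finset (ConeTriple N K) := 𝒟.filter (fun p => p.2.1.Nonempty ∧ coneDeg p = e) with hS
  set 𝒟' : Finset (ConeTriple N K) := (𝒟 \ S) ∪ S.biUnion pieceTriples with hD
  have hmem' : ∀ q : ConeTriple N K,
      q ∈ 𝒟' ↔ (q ∈ 𝒟 ∧ q ∉ S) ∨ ∃ p ∈ S, q ∈ pieceTriples p := by
    intro q
    simp [hD, Finset.mem_union, Finset.mem_sdiff, Finset.mem_biUnion]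
  have hSsub : ∀ p ∈ S, p ∈ 𝒟 := fun p hp => (Finset.mem_filter.mp hp).1
  refine ⟨𝒟', ⟨?_, ?_, ?_, ?_⟩, ?_, ?_⟩
  · -- nonzero and homogeneous
    intro q hq
    rcases (hmem' q).mp hq with ⟨h1, _⟩ | ⟨p, hp, hqp⟩
    · exact hne q h1
    · rw [piece_snd hqp]
      exact hne p (hSsub p hp)
  · -- cones inside M
    intro q hq
    rcases (hmem' q).mp hq with ⟨h1, _⟩ | ⟨p, hp, hqp⟩
    · exact hle q h1
    · exact (piece_cone_le hqp).trans (hle p (hSsub p hp))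
  · -- sup equality
    refine le_antisymm ?_ ?_
    · rw [hsup]
      refine iSup₂_le fun p hp => ?_
      by_cases hpS : p ∈ S
      · rw [cone_eq_sup_pieces p]
        refine iSup₂_le fun r hr => ?_
        exact le_sup_cone ((hmem' r).mpr (Or.inr ⟨p, hpS, hr⟩))
      · exact le_sup_cone ((hmem' p).mpr (Or.inl ⟨hp, hpS⟩))
    · refine iSup₂_le fun q hq => ?_
      rcases (hmem' q).mp hq with ⟨h1, _⟩ | ⟨p, hp, hqp⟩
      · exact hle q h1
      · exact (piece_cone_le hqp).trans (hle p (hSsub p hp))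
  · -- disjointness
    intro q hq
    rcases (hmem' q).mp hq with ⟨hq1, hq2⟩ | ⟨p, hpS, hqp⟩
    · refine (hdisj q hq1).mono_right (iSup₂_le fun r hr => ?_)
      have hrq : r ≠ q := Finset.ne_of_mem_erase hr
      rcases (hmem' r).mp (Finset.mem_of_mem_erase hr) with ⟨h1, _⟩ | ⟨p, hp, hrp⟩
      · exact le_sup_cone (Finset.mem_erase.mpr ⟨hrq, h1⟩)
      · have hpq : p ≠ q := fun hc => hq2 (hc ▸ hp)
        exact (piece_cone_le hrp).trans
          (le_sup_cone (Finset.mem_erase.mpr ⟨hpq, hSsub p hp⟩))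
    · have hbound : (⨆ r ∈ 𝒟'.erase q, cone r) ≤
          (⨆ r ∈ (pieceTriples p).erase q, cone r) ⊔ (⨆ r ∈ 𝒟.erase p, cone r) := by
        refine iSup₂_le fun r hr => ?_
        have hrq : r ≠ q := Finset.ne_of_mem_erase hr
        rcases (hmem' r).mp (Finset.mem_of_mem_erase hr) with ⟨h1, h2⟩ | ⟨p', hp', hrp'⟩
        · have hrp : r ≠ p := fun hc => h2 (hc ▸ hpS)
          exact le_trans (le_sup_cone (Finset.mem_erase.mpr ⟨hrp, h1⟩)) le_sup_right
        · by_cases hpp : p' = p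
          · subst hpp
            exact le_trans (le_sup_cone (Finset.mem_erase.mpr ⟨hrq, hrp'⟩)) le_sup_left
          · exact le_trans ((piece_cone_le hrp').trans
              (le_sup_cone (Finset.mem_erase.mpr ⟨hpp, hSsub p' hp'⟩))) le_sup_right
      refine Disjoint.mono_right hbound ?_
      refine disjoint_sup_of (P := cone p) (piece_cone_le hqp)
        (iSup₂_le fun r hr => piece_cone_le (Finset.mem_of_mem_erase hr))
        (piece_cone_disjoint (hne p (hSsub p hpS)).1 hqp)
        (hdisj p (hSsub p hpS))
  · -- standardness (i)
    intro q hq hqne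
    rcases (hmem' q).mp hq with ⟨h1, h2⟩ | ⟨p, hp, hqp⟩
    · have hd := hst1 q h1 hqne
      have hnd : coneDeg q ≠ e := fun hc => h2 (Finset.mem_filter.mpr ⟨h1, hqne, hc⟩)
      omega
    · obtain ⟨-, hpd⟩ := (Finset.mem_filter.mp hp).2
      rcases Finset.mem_insert.mp hqp with h | h
      · exfalso
        rw [h] at hqne
        exact Finset.not_nonempty_empty hqne
      · obtain ⟨j, hj, rfl⟩ := Finset.mem_image.mp h
        rw [coneDeg_piece, hpd]
  · -- standardness (ii)
    intro q hq hqne d'' hd1 hd2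
    rcases (hmem' q).mp hq with ⟨h1, h2⟩ | ⟨p, hp, hqp⟩
    · obtain ⟨r, hr, hrne, hrdeg, hrcard⟩ :=
        hst2 q h1 hqne d'' (le_trans (Nat.le_succ e) hd1) hd2
      have hrS : r ∉ S := by
        intro hc
        have := (Finset.mem_filter.mp hc).2.2
        omega
      exact ⟨r, (hmem' r).mpr (Or.inl ⟨hr, hrS⟩), hrne, hrdeg, hrcard⟩
    · obtain ⟨hpy, hpd⟩ := (Finset.mem_filter.mp hp).2
      rcases Finset.mem_insert.mp hqp with h | h
      · exfalso
        rw [h] at hqne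
        exact Finset.not_nonempty_empty hqne
      · obtain ⟨j, hj, rfl⟩ := Finset.mem_image.mp h
        have hdq : coneDeg (p.1 + Finsupp.single j 1,
            p.2.1.filter (fun i => j ≤ i), p.2.2) = e + 1 := by
          rw [coneDeg_piece, hpd]
        have hd'' : d'' = e + 1 := by
          rw [hdq] at hd2
          omega
        set j0 := p.2.1.min' hpy with hj0
        have hfil : p.2.1.filter (fun i => j0 ≤ i) = p.2.1 :=
          Finset.filter_true_of_mem (fun i hi => Finset.min'_le _ _ hi)
        refine ⟨(p.1 + Finsupp.single j0 1, p.2.1.filter (fun i => j0 ≤ i), p.2.2),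
          (hmem' _).mpr (Or.inr ⟨p, hp, Finset.mem_insert_of_mem
            (Finset.mem_image.mpr ⟨j0, p.2.1.min'_mem hpy, rfl⟩)⟩), ?_, ?_, ?_⟩
        · simpa [hfil] using hpy
        · rw [coneDeg_piece, hpd, hd'']
        · simp only [hfil]
          exact Finset.card_le_card (Finset.filter_subset _ _)

end Step

theorem standard_decomposition_shift {K : Type*} [Field K]
    {N : ℕ} (hN : 1 ≤ N) (M : Submodule K (MvPolynomial (Fin N) K))
    (hM : IsHomogeneousSubspace M)
    (d : ℕ) (𝒟 : Finset (ConeTriple N K))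
    (hdec : IsConeDecomp 𝒟 M) (hstd : IsStandardDecomp d 𝒟) :
    ∀ d' : ℕ, d ≤ d' → ∃ 𝒟' : Finset (ConeTriple N K),
      IsConeDecomp 𝒟' M ∧ IsStandardDecomp d' 𝒟' := by
  intro d' hd'
  induction d', hd' using Nat.le_induction with
  | base => exact ⟨𝒟, hdec, hstd⟩
  | succ n hn ih =>
    obtain ⟨𝒟'', h1, h2⟩ := ih
    exact step_decomp n h1 h2
end

section
/- Let 𝒟 be a d-standard cone decomposition of a homogeneous K-linear subspace M of R = K[x₁,…,x_N], and let (w,y,h) and (v,z,g) be two distinct elements of 𝒟 such that |w| + deg(h) = |v| + deg(g) and #z ≥ #y > 0. Let x_i ∈ y be arbitrary. Then 𝒟′ := (𝒟 ∖ {(w,y,h)}) ∪ {(w, y∖{x_i}, h), (w+ε_i, y, h)} (where ε_i is the i-th unit vector of ℕ^N) is also a d-standard cone decomposition of M. -/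
open MvPolynomial
open scoped Classical

section Helpers


variable {N : ℕ} {K : Type*} [Field K]

lemma cone_erase_le (w : Fin N →₀ ℕ) (y : Finset (Fin N)) (h : MvPolynomial (Fin N) K)
    (i : Fin N) :
    cone ((w, y.erase i, h) : ConeTriple N K) ≤ cone ((w, y, h) : ConeTriple N K) := by
  apply Submodule.span_le.2
  rintro q ⟨γ, hγ, rfl⟩
  exact Submodule.subset_span
    ⟨γ, fun j hj => hγ j fun hj' => hj (Finset.mem_of_mem_erase hj'), rfl⟩

lemma cone_shift_le (w : Fin N →₀ ℕ) (y : Finset (Fin N)) (h : MvPolynomial (Fin N) K)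
    {i : Fin N} (hi : i ∈ y) :
    cone ((w + Finsupp.single i 1, y, h) : ConeTriple N K) ≤
      cone ((w, y, h) : ConeTriple N K) := by
  apply Submodule.span_le.2
  rintro q ⟨γ, hγ, rfl⟩
  refine Submodule.subset_span ⟨Finsupp.single i 1 + γ, ?_, by rw [add_assoc]⟩
  intro j hj
  have hij : i ≠ j := fun e => hj (e ▸ hi)
  simp [Finsupp.add_apply, Finsupp.single_eq_of_ne' hij, hγ j hj]

lemma cone_le_split (w : Fin N →₀ ℕ) (y : Finset (Fin N)) (h : MvPolynomial (Fin N) K)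
    {i : Fin N} (hi : i ∈ y) :
    cone ((w, y, h) : ConeTriple N K) ≤
      cone ((w, y.erase i, h) : ConeTriple N K) ⊔
        cone ((w + Finsupp.single i 1, y, h) : ConeTriple N K) := by
  apply Submodule.span_le.2
  rintro q ⟨γ, hγ, rfl⟩
  by_cases hγi : γ i = 0
  · apply Submodule.mem_sup_left
    refine Submodule.subset_span ⟨γ, ?_, rfl⟩
    intro j hj
    by_cases hji : j = i
    · exact hji ▸ hγi
    · exact hγ j fun hjy => hj (Finset.mem_erase.2 ⟨hji, hjy⟩)
  · apply Submodule.mem_sup_right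
    have hkey : w + γ = (w + Finsupp.single i 1) + (γ - Finsupp.single i 1) := by
      ext j
      rcases eq_or_ne j i with rfl | hij
      · simp only [Finsupp.add_apply, Finsupp.tsub_apply, Finsupp.single_eq_same]
        omega
      · simp [Finsupp.add_apply, Finsupp.tsub_apply, Finsupp.single_eq_of_ne' (Ne.symm hij)]
    refine Submodule.subset_span ⟨γ - Finsupp.single i 1, ?_, by rw [← hkey]⟩
    intro j hj
    simp [Finsupp.tsub_apply, hγ j hj]

/-- Polynomials whose exponents all lie in `A`. -/
def expSupported (A : Set (Fin N →₀ ℕ)) : Submodule K (MvPolynomial (Fin N) K) where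
  carrier := {f | ∀ α ∉ A, coeff α f = 0}
  zero_mem' := fun α _ => coeff_zero α
  add_mem' := fun ha hb α hα => by rw [coeff_add, ha α hα, hb α hα, add_zero]
  smul_mem' := fun c f hf α hα => by rw [coeff_smul, hf α hα, smul_zero]

lemma expSupported_disjoint {A B : Set (Fin N →₀ ℕ)} (hAB : Disjoint A B) :
    Disjoint (expSupported (K := K) A) (expSupported (K := K) B) := by
  rw [Submodule.disjoint_def]
  intro f hfA hfB
  ext α
  simp only [coeff_zero]
  by_cases hα : α ∈ A
  · exact hfB α (Set.disjoint_left.1 hAB hα)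
  · exact hfA α hα

lemma cone_eq_map (p : ConeTriple N K) :
    cone p = Submodule.map (LinearMap.mulRight K p.2.2)
      (Submodule.span K {q | ∃ γ : Fin N →₀ ℕ, (∀ j ∉ p.2.1, γ j = 0) ∧
        q = monomial (p.1 + γ) 1}) := by
  rw [Submodule.map_span, cone]
  congr 1
  ext q
  constructor
  · rintro ⟨γ, hγ, rfl⟩
    exact ⟨monomial (p.1 + γ) 1, ⟨γ, hγ, rfl⟩, rfl⟩
  · rintro ⟨q', ⟨γ, hγ, rfl⟩, rfl⟩
    exact ⟨γ, hγ, rfl⟩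

lemma span_mono_le_expSupported (w : Fin N →₀ ℕ) (y : Finset (Fin N)) :
    Submodule.span K {q | ∃ γ : Fin N →₀ ℕ, (∀ j ∉ y, γ j = 0) ∧
        q = monomial (w + γ) 1} ≤
      expSupported {α | ∃ γ : Fin N →₀ ℕ, (∀ j ∉ y, γ j = 0) ∧ α = w + γ} := by
  apply Submodule.span_le.2
  rintro q ⟨γ, hγ, rfl⟩
  intro α hα
  rw [coeff_monomial, if_neg]
  exact fun e => hα ⟨γ, hγ, e.symm⟩

lemma cone_split_disjoint (w : Fin N →₀ ℕ) (y : Finset (Fin N))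
    {h : MvPolynomial (Fin N) K} (hh : h ≠ 0) (i : Fin N) :
    Disjoint (cone ((w, y.erase i, h) : ConeTriple N K))
      (cone ((w + Finsupp.single i 1, y, h) : ConeTriple N K)) := by
  have hinj : Function.Injective (LinearMap.mulRight K h) := by
    intro a b hab
    simp only [LinearMap.mulRight_apply] at hab
    exact mul_right_cancel₀ hh hab
  have hA : Disjoint
      {α : Fin N →₀ ℕ | ∃ γ : Fin N →₀ ℕ, (∀ j ∉ y.erase i, γ j = 0) ∧ α = w + γ}
      {α : Fin N →₀ ℕ | ∃ γ : Fin N →₀ ℕ, (∀ j ∉ y, γ j = 0) ∧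
        α = (w + Finsupp.single i 1) + γ} := by
    rw [Set.disjoint_left]
    rintro α ⟨γ₁, h₁, rfl⟩ ⟨γ₂, h₂, e₂⟩
    have e := congrArg (fun f : Fin N →₀ ℕ => f i) e₂
    simp only [Finsupp.add_apply, Finsupp.single_eq_same] at e
    have : γ₁ i = 0 := h₁ i (Finset.notMem_erase i y)
    omega
  have hd : Disjoint
      (Submodule.span K {q : MvPolynomial (Fin N) K |
        ∃ γ : Fin N →₀ ℕ, (∀ j ∉ y.erase i, γ j = 0) ∧ q = monomial (w + γ) 1})
      (Submodule.span K {q : MvPolynomial (Fin N) K |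
        ∃ γ : Fin N →₀ ℕ, (∀ j ∉ y, γ j = 0) ∧
          q = monomial ((w + Finsupp.single i 1) + γ) 1}) :=
    (expSupported_disjoint hA).mono (span_mono_le_expSupported w (y.erase i))
      (span_mono_le_expSupported (w + Finsupp.single i 1) y)
  rw [disjoint_iff, cone_eq_map, cone_eq_map, ← Submodule.map_inf _ hinj,
    hd.eq_bot, Submodule.map_bot]

end Helpers

theorem exactness_split {K : Type*} [Field K]
    {N : ℕ} (hN : 1 ≤ N) (M : Submodule K (MvPolynomial (Fin N) K))
    (hM : IsHomogeneousSubspace M)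
    (d : ℕ) (𝒟 : Finset (ConeTriple N K))
    (hdec : IsConeDecomp 𝒟 M) (hstd : IsStandardDecomp d 𝒟)
    (w v : Fin N →₀ ℕ) (y z : Finset (Fin N)) (h g : MvPolynomial (Fin N) K)
    (hwy : (w, y, h) ∈ 𝒟) (hvz : (v, z, g) ∈ 𝒟)
    (hne : (w, y, h) ≠ (v, z, g))
    (hdeg : coneDeg ((w, y, h) : ConeTriple N K) = coneDeg ((v, z, g) : ConeTriple N K))
    (hcard : y.card ≤ z.card) (hy : 0 < y.card)
    (i : Fin N) (hi : i ∈ y) :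
    IsConeDecomp
      ((𝒟.erase (w, y, h)) ∪
        {(w, y.erase i, h), (w + Finsupp.single i 1, y, h)}) M ∧
    IsStandardDecomp d
      ((𝒟.erase (w, y, h)) ∪
        {(w, y.erase i, h), (w + Finsupp.single i 1, y, h)}) := by
  obtain ⟨h1, h2, h3, h4⟩ := hdec
  obtain ⟨s1, s2⟩ := hstd
  set p₀ : ConeTriple N K := (w, y, h) with hp₀
  set p₁ : ConeTriple N K := (w, y.erase i, h) with hp₁
  set p₂ : ConeTriple N K := (w + Finsupp.single i 1, y, h) with hp₂
  set 𝒟' : Finset (ConeTriple N K) := (𝒟.erase p₀) ∪ {p₁, p₂} with h𝒟'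
  have hh : h ≠ 0 := (h1 p₀ hwy).1
  have yne : y.Nonempty := Finset.card_pos.1 hy
  have hle1 : cone p₁ ≤ cone p₀ := cone_erase_le w y h i
  have hle2 : cone p₂ ≤ cone p₀ := cone_shift_le w y h hi
  have hsplit : cone p₀ = cone p₁ ⊔ cone p₂ :=
    le_antisymm (cone_le_split w y h hi) (sup_le hle1 hle2)
  have hdisj12 : Disjoint (cone p₁) (cone p₂) := cone_split_disjoint w y hh i
  have hE : 𝒟 = insert p₀ (𝒟.erase p₀) := (Finset.insert_erase hwy).symm
  have hSd : (⨆ p ∈ 𝒟, cone p) = cone p₀ ⊔ ⨆ p ∈ 𝒟.erase p₀, cone p := by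
    conv_lhs => rw [hE]
    rw [Finset.iSup_insert]
  have hSd' : (⨆ p ∈ 𝒟', cone p)
      = (⨆ p ∈ 𝒟.erase p₀, cone p) ⊔ (cone p₁ ⊔ cone p₂) := by
    rw [h𝒟', Finset.iSup_union, Finset.iSup_insert, Finset.iSup_singleton]
  have hconele : ∀ p ∈ 𝒟', cone p ≤ M := by
    intro p hp
    rcases Finset.mem_union.1 hp with hpE | hpn
    · exact h2 p (Finset.mem_of_mem_erase hpE)
    · rcases Finset.mem_insert.1 hpn with rfl | hpn2
      · exact hle1.trans (h2 p₀ hwy)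
      · rw [Finset.mem_singleton] at hpn2
        exact hpn2 ▸ hle2.trans (h2 p₀ hwy)
  have hdm : d ≤ coneDeg p₀ := s1 p₀ hwy yne
  have hdeg2 : coneDeg p₂ = coneDeg p₀ + 1 := by
    simp only [coneDeg, hp₂, hp₀, Finsupp.add_apply, Finset.sum_add_distrib,
      Finsupp.single_apply]
    simp
    omega
  have hvz' : (v, z, g) ∈ 𝒟' :=
    Finset.mem_union_left _ (Finset.mem_erase.2 ⟨Ne.symm hne, hvz⟩)
  have hzne : z.Nonempty := Finset.card_pos.1 (lt_of_lt_of_le hy hcard)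
  have key : ∀ d', d ≤ d' → d' ≤ coneDeg p₀ → ∀ c, c ≤ y.card →
      ∃ q ∈ 𝒟', q.2.1.Nonempty ∧ coneDeg q = d' ∧ c ≤ q.2.1.card := by
    intro d' hdd' hd'D c hc
    obtain ⟨q, hq, hqne, hqdeg, hqcard⟩ := s2 p₀ hwy yne d' hdd' hd'D
    by_cases hqp : q = p₀
    · refine ⟨(v, z, g), hvz', hzne, ?_, le_trans hc hcard⟩
      rw [← hdeg, ← hqdeg, hqp]
    · exact ⟨q, Finset.mem_union_left _ (Finset.mem_erase.2 ⟨hqp, hq⟩), hqne, hqdeg,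
        le_trans hc hqcard⟩
  refine ⟨⟨?_, hconele, ?_, ?_⟩, ?_, ?_⟩
  · -- nonzero and homogeneous
    intro p hp
    rcases Finset.mem_union.1 hp with hpE | hpn
    · exact h1 p (Finset.mem_of_mem_erase hpE)
    · rcases Finset.mem_insert.1 hpn with rfl | hpn2
      · exact h1 p₀ hwy
      · rw [Finset.mem_singleton] at hpn2
        exact hpn2 ▸ h1 p₀ hwy
  · -- M = sup
    rw [hSd', h3, hSd, ← hsplit, sup_comm]
  · -- disjointness
    intro p hp
    rcases Finset.mem_union.1 hp with hpE | hpn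
    · have hp𝒟 : p ∈ 𝒟 := Finset.mem_of_mem_erase hpE
      have hpne : p ≠ p₀ := (Finset.mem_erase.1 hpE).1
      refine (h4 p hp𝒟).mono_right ?_
      apply iSup₂_le
      intro q hq
      have hqne : q ≠ p := (Finset.mem_erase.1 hq).1
      rcases Finset.mem_union.1 (Finset.mem_of_mem_erase hq) with hqE | hqn
      · exact le_iSup₂_of_le q
          (Finset.mem_erase.2 ⟨hqne, Finset.mem_of_mem_erase hqE⟩) le_rfl
      · have hq0 : cone q ≤ cone p₀ := by
          rcases Finset.mem_insert.1 hqn with rfl | hqn2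
          · exact hle1
          · rw [Finset.mem_singleton] at hqn2
            exact hqn2 ▸ hle2
        exact hq0.trans
          (le_iSup₂_of_le p₀ (Finset.mem_erase.2 ⟨Ne.symm hpne, hwy⟩) le_rfl)
    · have hbound : ∀ a b : ConeTriple N K, p = a →
          (∀ q ∈ 𝒟'.erase p, q = b ∨ q ∈ 𝒟.erase p₀ ∨ q = a) →
          True := fun _ _ _ _ => trivial
      rcases Finset.mem_insert.1 hpn with rfl | hpn2
      · -- p = p₁
        have hb : (⨆ q ∈ 𝒟'.erase p₁, cone q)
            ≤ cone p₂ ⊔ ⨆ q ∈ 𝒟.erase p₀, cone q := by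
          apply iSup₂_le
          intro q hq
          have hqne : q ≠ p₁ := (Finset.mem_erase.1 hq).1
          rcases Finset.mem_union.1 (Finset.mem_of_mem_erase hq) with hqE | hqn
          · exact le_sup_of_le_right (le_iSup₂_of_le q hqE le_rfl)
          · rcases Finset.mem_insert.1 hqn with rfl | hqn2
            · exact absurd rfl hqne
            · rw [Finset.mem_singleton] at hqn2
              exact hqn2 ▸ le_sup_left
        refine Disjoint.mono_right hb ?_
        exact hdisj12.disjoint_sup_right_of_disjoint_sup_left
          (by rw [← hsplit]; exact h4 p₀ hwy)
      · rw [Finset.mem_singleton] at hpn2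
        subst hpn2
        -- p = p₂
        have hb : (⨆ q ∈ 𝒟'.erase p₂, cone q)
            ≤ cone p₁ ⊔ ⨆ q ∈ 𝒟.erase p₀, cone q := by
          apply iSup₂_le
          intro q hq
          have hqne : q ≠ p₂ := (Finset.mem_erase.1 hq).1
          rcases Finset.mem_union.1 (Finset.mem_of_mem_erase hq) with hqE | hqn
          · exact le_sup_of_le_right (le_iSup₂_of_le q hqE le_rfl)
          · rcases Finset.mem_insert.1 hqn with rfl | hqn2
            · exact le_sup_left
            · rw [Finset.mem_singleton] at hqn2
              exact absurd hqn2 hqne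
        refine Disjoint.mono_right hb ?_
        exact hdisj12.symm.disjoint_sup_right_of_disjoint_sup_left
          (by rw [sup_comm, ← hsplit]; exact h4 p₀ hwy)
  · -- standardness (i)
    intro p hp hpne
    rcases Finset.mem_union.1 hp with hpE | hpn
    · exact s1 p (Finset.mem_of_mem_erase hpE) hpne
    · rcases Finset.mem_insert.1 hpn with rfl | hpn2
      · exact hdm
      · rw [Finset.mem_singleton] at hpn2
        subst hpn2
        omega
  · -- standardness (ii)
    intro p hp hpne d' hdd' hd'p
    rcases Finset.mem_union.1 hp with hpE | hpn
    · obtain ⟨q, hq, hqne, hqdeg, hqcard⟩ :=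
        s2 p (Finset.mem_of_mem_erase hpE) hpne d' hdd' hd'p
      by_cases hqp : q = p₀
      · have hd'D : d' ≤ coneDeg p₀ := by rw [← hqdeg, hqp]
        have hcy : p.2.1.card ≤ y.card := by rw [hqp] at hqcard; exact hqcard
        exact key d' hdd' hd'D _ hcy
      · exact ⟨q, Finset.mem_union_left _ (Finset.mem_erase.2 ⟨hqp, hq⟩), hqne, hqdeg,
          hqcard⟩
    · rcases Finset.mem_insert.1 hpn with rfl | hpn2
      · exact key d' hdd' hd'p _ (Finset.card_erase_le)
      · rw [Finset.mem_singleton] at hpn2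
        subst hpn2
        by_cases hle : d' ≤ coneDeg p₀
        · obtain ⟨q, hq, hqne, hqdeg, hqcard⟩ := key d' hdd' hle y.card le_rfl
          exact ⟨q, hq, hqne, hqdeg, hqcard⟩
        · refine ⟨p₂, Finset.mem_union_right _ (by simp), yne, ?_, le_rfl⟩
          rw [hdeg2] at hd'p ⊢
          omega
end

section
/- Let 𝒟 be an exact cone decomposition of a homogeneous K-linear subspace of R = K[x₁,…,x_N], with Macaulay constants b₀ ≥ b₁ ≥ ⋯ ≥ b_{N+1}. Then for each i = 1,…,N and each integer e with b_{i+1} ≤ e < b_i there is exactly one triple (w,y,h) ∈ 𝒟⁺ with |w| + deg(h) = e, and for this triple #y = i. -/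
open MvPolynomial
open scoped Classical

/-- `𝒟` is exact: it is `d`-standard for some `d`, and for each degree at most one
triple `(w,y,h) ∈ 𝒟⁺` has `|w| + deg h` equal to that degree. -/
def IsExactDecomp {N : ℕ} {K : Type*} [Field K] (𝒟 : Finset (ConeTriple N K)) : Prop :=
  (∃ d, IsStandardDecomp d 𝒟) ∧
  ∀ p ∈ 𝒟, ∀ q ∈ 𝒟, p.2.1.Nonempty → q.2.1.Nonempty → coneDeg p = coneDeg q → p = q

/-- `d_𝒟`: the least `d` such that `𝒟` is `d`-standard. -/
noncomputable def dMin {N : ℕ} {K : Type*} [Field K]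
    (𝒟 : Finset (ConeTriple N K)) : ℕ :=
  sInf {d | IsStandardDecomp d 𝒟}

/-- The Macaulay constant `b_i = max {d_𝒟, 1 + deg 𝒟_i}` of `𝒟`, where
`𝒟_i = {(w,y,h) ∈ 𝒟 : #y ≥ i}` (and `b_i = d_𝒟` when `𝒟_i = ∅`). -/
noncomputable def macaulay {N : ℕ} {K : Type*} [Field K]
    (𝒟 : Finset (ConeTriple N K)) (i : ℕ) : ℕ :=
  if (𝒟.filter fun p => i ≤ p.2.1.card).Nonempty then
    max (dMin 𝒟) (1 + (𝒟.filter fun p => i ≤ p.2.1.card).sup coneDeg)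
  else dMin 𝒟

theorem exact_decomposition_rigidity {K : Type*} [Field K]
    {N : ℕ} (hN : 1 ≤ N) (M : Submodule K (MvPolynomial (Fin N) K))
    (hM : IsHomogeneousSubspace M)
    (𝒟 : Finset (ConeTriple N K))
    (hdec : IsConeDecomp 𝒟 M) (hex : IsExactDecomp 𝒟) :
    ∀ i : ℕ, 1 ≤ i → i ≤ N → ∀ e : ℕ,
      macaulay 𝒟 (i + 1) ≤ e → e < macaulay 𝒟 i →
      (∃! p : ConeTriple N K, p ∈ 𝒟 ∧ p.2.1.Nonempty ∧ coneDeg p = e) ∧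
      ∀ p ∈ 𝒟, p.2.1.Nonempty → coneDeg p = e → p.2.1.card = i := by
  intro i hi1 hiN e he1 he2
  obtain ⟨hstd, huniq⟩ := hex
  have hdmem : IsStandardDecomp (dMin 𝒟) 𝒟 := Nat.sInf_mem hstd
  set d := dMin 𝒟 with hd
  have hdb : d ≤ macaulay 𝒟 (i + 1) := by
    unfold macaulay; split
    · exact le_max_left _ _
    · exact le_rfl
  have hde : d ≤ e := le_trans hdb he1
  have hfi : (𝒟.filter fun p => i ≤ p.2.1.card).Nonempty := by
    by_contra hfi
    have : macaulay 𝒟 i = d := by unfold macaulay; rw [if_neg hfi]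
    omega
  have hbi : macaulay 𝒟 i = max d (1 + (𝒟.filter fun p => i ≤ p.2.1.card).sup coneDeg) := by
    unfold macaulay; rw [if_pos hfi]
  have hle : e ≤ (𝒟.filter fun p => i ≤ p.2.1.card).sup coneDeg := by
    rw [hbi] at he2; omega
  obtain ⟨pm, hpm, hpmsup⟩ := Finset.exists_mem_eq_sup _ hfi coneDeg
  rw [Finset.mem_filter] at hpm
  obtain ⟨hpmD, hpmi⟩ := hpm
  have hpmne : pm.2.1.Nonempty := Finset.card_pos.mp (lt_of_lt_of_le hi1 hpmi)
  have hepm : e ≤ coneDeg pm := by rw [hpmsup] at hle; exact hle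
  obtain ⟨q, hqD, hqne, hqdeg, hqcard⟩ := hdmem.2 pm hpmD hpmne e hde hepm
  have hiq : i ≤ q.2.1.card := le_trans hpmi hqcard
  have hqi : q.2.1.card ≤ i := by
    by_contra hqi
    push_neg at hqi
    have hq1 : q ∈ 𝒟.filter fun p => i + 1 ≤ p.2.1.card :=
      Finset.mem_filter.mpr ⟨hqD, hqi⟩
    have hne : (𝒟.filter fun p => i + 1 ≤ p.2.1.card).Nonempty := ⟨q, hq1⟩
    have : macaulay 𝒟 (i + 1)
        = max d (1 + (𝒟.filter fun p => i + 1 ≤ p.2.1.card).sup coneDeg) := by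
      unfold macaulay; rw [if_pos hne]
    have hsup : coneDeg q ≤ (𝒟.filter fun p => i + 1 ≤ p.2.1.card).sup coneDeg :=
      Finset.le_sup hq1
    omega
  refine ⟨⟨q, ⟨hqD, hqne, hqdeg⟩, ?_⟩, ?_⟩
  · rintro p ⟨hpD, hpne, hpdeg⟩
    exact huniq p hpD q hqD hpne hqne (by rw [hpdeg, hqdeg])
  · intro p hpD hpne hpdeg
    have : p = q := huniq p hpD q hqD hpne hqne (by rw [hpdeg, hqdeg])
    rw [this]; omega
end

section
/- Let M be a homogeneous K-linear subspace of R = K[x₁,…,x_N] admitting a d-standard cone decomposition 𝒟. Then M admits an exact d-standard cone decomposition 𝒟′ whose Macaulay constant b₀ satisfies b₀ ≥ 1 + deg 𝒟. -/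
open MvPolynomial
open scoped Classical

section Aux

variable {K : Type*} [Field K] {N : ℕ}

/-- exponent set of a cone -/
def expSet (w : Fin N →₀ ℕ) (y : Finset (Fin N)) : Set (Fin N →₀ ℕ) :=
  {v | ∃ γ : Fin N →₀ ℕ, (∀ i ∉ y, γ i = 0) ∧ v = w + γ}

noncomputable def monSpan (K : Type*) [Field K] {N : ℕ} (E : Set (Fin N →₀ ℕ)) :
    Submodule K (MvPolynomial (Fin N) K) :=
  Submodule.span K ((fun s => (monomial s (1:K))) '' E)

lemma mem_monSpan {E : Set (Fin N →₀ ℕ)} {f : MvPolynomial (Fin N) K} :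
    f ∈ monSpan K E ↔ ↑f.support ⊆ E := by
  constructor
  · intro hf
    refine Submodule.span_induction ?_ ?_ ?_ ?_ hf
    · rintro x ⟨s, hs, rfl⟩
      refine subset_trans ?_ (Set.singleton_subset_iff.2 hs)
      rw [MvPolynomial.support_monomial]
      split <;> simp
    · simp
    · intro a b _ _ ha hb
      refine subset_trans (Finset.coe_subset.mpr MvPolynomial.support_add) ?_
      rw [Finset.coe_union]; exact Set.union_subset ha hb
    · intro c a _ ha
      exact subset_trans (Finset.coe_subset.mpr MvPolynomial.support_smul) ha
  · intro hsupp
    rw [← MvPolynomial.support_sum_monomial_coeff f]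
    apply Submodule.sum_mem
    intro s hs
    have h1 : monomial s (coeff s f) = (coeff s f) • monomial s (1:K) := by
      rw [MvPolynomial.smul_monomial, smul_eq_mul, mul_one]
    rw [h1]
    exact Submodule.smul_mem _ _ (Submodule.subset_span ⟨s, hsupp hs, rfl⟩)

lemma cone_eq (p : ConeTriple N K) :
    cone p = Submodule.map (LinearMap.mulRight K p.2.2) (monSpan K (expSet p.1 p.2.1)) := by
  rw [cone, monSpan, Submodule.map_span]
  congr 1
  ext q
  simp only [Set.mem_image, Set.mem_setOf_eq, expSet, LinearMap.mulRight_apply]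
  constructor
  · rintro ⟨γ, hγ, rfl⟩
    exact ⟨monomial (p.1+γ) 1, ⟨_, ⟨γ, hγ, rfl⟩, rfl⟩, rfl⟩
  · rintro ⟨_, ⟨v, ⟨γ, hγ, rfl⟩, rfl⟩, rfl⟩
    exact ⟨γ, hγ, rfl⟩

lemma monSpan_mono {E F : Set (Fin N →₀ ℕ)} (h : E ⊆ F) : monSpan K E ≤ monSpan K F :=
  Submodule.span_mono (Set.image_mono h)

lemma disjoint_map_monSpan {h : MvPolynomial (Fin N) K} (hh : h ≠ 0) {E F : Set (Fin N →₀ ℕ)}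
    (hEF : Disjoint E F) :
    Disjoint (Submodule.map (LinearMap.mulRight K h) (monSpan K E))
             (Submodule.map (LinearMap.mulRight K h) (monSpan K F)) := by
  rw [Submodule.disjoint_def]
  intro x hxE hxF
  obtain ⟨a, ha, hax⟩ := hxE
  obtain ⟨b, hb, hbx⟩ := hxF
  simp only [LinearMap.mulRight_apply] at hax hbx
  have hab : a = b := mul_right_cancel₀ hh (hax.trans hbx.symm)
  subst hab
  have h1 : (a.support : Set (Fin N →₀ ℕ)) ⊆ E ∩ F :=
    Set.subset_inter (mem_monSpan.1 ha) (mem_monSpan.1 hb)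
  rw [Set.disjoint_iff_inter_eq_empty.1 hEF] at h1
  have : a.support = ∅ := by
    rw [← Finset.coe_empty] at h1
    exact_mod_cast Finset.coe_subset.1 h1 |> Finset.subset_empty.1
  rw [← hax, MvPolynomial.support_eq_empty.1 this, zero_mul]


/-- The pieces of a cone split -/
noncomputable def pieces (p : ConeTriple N K) : Finset (ConeTriple N K) :=
  insert (p.1, ∅, p.2.2)
    (p.2.1.image fun j => (p.1 + Finsupp.single j 1, p.2.1.filter (fun i => j ≤ i), p.2.2))

lemma expSet_empty (w : Fin N →₀ ℕ) : expSet w (∅ : Finset (Fin N)) = {w} := by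
  ext v
  simp only [expSet, Set.mem_setOf_eq, Set.mem_singleton_iff]
  constructor
  · rintro ⟨γ, hγ, rfl⟩
    have : γ = 0 := by ext i; exact hγ i (Finset.notMem_empty i)
    simp [this]
  · rintro rfl; exact ⟨0, by simp, by simp⟩

lemma mem_piece_gt {w : Fin N →₀ ℕ} {y : Finset (Fin N)} {j : Fin N} {v : Fin N →₀ ℕ}
    (hv : v ∈ expSet (w + Finsupp.single j 1) (y.filter (fun i => j ≤ i))) :
    w j < v j ∧ ∀ i, i < j → v i = w i := by
  obtain ⟨γ, hγ, rfl⟩ := hv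
  constructor
  · have : Finsupp.single j 1 j = 1 := Finsupp.single_eq_same
    simp only [Finsupp.add_apply, this]
    omega
  · intro i hij
    have h0 : γ i = 0 := by
      apply hγ
      simp only [Finset.mem_filter, not_and]
      intro _
      exact not_le.2 hij
    simp [Finsupp.add_apply, Finsupp.single_apply, Fin.ne_of_gt hij, h0,
      (Fin.ne_of_gt hij).symm]

lemma expSet_piece_subset {w : Fin N →₀ ℕ} {y : Finset (Fin N)} {j : Fin N} (hj : j ∈ y) :
    expSet (w + Finsupp.single j 1) (y.filter (fun i => j ≤ i)) ⊆ expSet w y := by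
  rintro v ⟨γ, hγ, rfl⟩
  refine ⟨Finsupp.single j 1 + γ, ?_, by rw [add_assoc]⟩
  intro i hi
  have h1 : γ i = 0 := hγ i (by simp only [Finset.mem_filter]; tauto)
  have h2 : i ≠ j := fun h => hi (h ▸ hj)
  simp [Finsupp.single_apply, h2.symm, h1]

lemma expSet_eq_union (w : Fin N →₀ ℕ) (y : Finset (Fin N)) :
    expSet w y = {w} ∪ ⋃ j ∈ (y : Set (Fin N)),
      expSet (w + Finsupp.single j 1) (y.filter (fun i => j ≤ i)) := by
  apply Set.Subset.antisymm
  · rintro v ⟨γ, hγ, rfl⟩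
    by_cases h0 : γ = 0
    · left; simp [h0]
    · right
      have hne : γ.support.Nonempty := Finsupp.support_nonempty_iff.2 h0
      set j := γ.support.min' hne with hjdef
      have hjs : j ∈ γ.support := γ.support.min'_mem hne
      have hjy : j ∈ y := by
        by_contra hc
        exact (Finsupp.mem_support_iff.1 hjs) (hγ j hc)
      have hj1 : 1 ≤ γ j := Nat.one_le_iff_ne_zero.2 (Finsupp.mem_support_iff.1 hjs)
      refine Set.mem_biUnion hjy ⟨γ - Finsupp.single j 1, ?_, ?_⟩
      · intro i hi
        simp only [Finset.mem_filter, not_and, not_le] at hi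
        rcases le_or_gt j i with h | h
        · by_cases hiy : i ∈ y
          · exact absurd (hi hiy) (not_lt.2 h)
          · simp [Finsupp.tsub_apply, hγ i hiy]
        · have : γ i = 0 := by
            by_contra hc
            exact absurd (γ.support.min'_le i (Finsupp.mem_support_iff.2 hc)) (not_le.2 h)
          simp [Finsupp.tsub_apply, this]
      · ext i
        simp only [Finsupp.add_apply, Finsupp.tsub_apply, Finsupp.single_apply]
        by_cases hij : j = i
        · subst hij; simp; omega
        · simp [hij]
  · apply Set.union_subset
    · rintro v rfl
      exact ⟨0, by simp, by simp⟩
    · refine Set.iUnion₂_subset fun j hj => expSet_piece_subset hj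

/-- the `j`-th piece of a cone -/
noncomputable def pc (p : ConeTriple N K) (j : Fin N) : ConeTriple N K :=
  (p.1 + Finsupp.single j 1, p.2.1.filter (fun i => j ≤ i), p.2.2)

lemma pieces_def (p : ConeTriple N K) :
    pieces p = insert (p.1, ∅, p.2.2) (p.2.1.image (pc p)) := rfl

lemma mem_pieces {p π : ConeTriple N K} :
    π ∈ pieces p ↔ π = (p.1, ∅, p.2.2) ∨ ∃ j ∈ p.2.1, π = pc p j := by
  simp [pieces_def, eq_comm]

lemma pc_h (p : ConeTriple N K) (j : Fin N) : (pc p j).2.2 = p.2.2 := rfl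

lemma pieces_h {p π : ConeTriple N K} (hπ : π ∈ pieces p) : π.2.2 = p.2.2 := by
  rcases mem_pieces.1 hπ with rfl | ⟨j, _, rfl⟩ <;> rfl

lemma pc_inj {p : ConeTriple N K} {j j' : Fin N} (h : pc p j = pc p j') : j = j' := by
  have h1 : p.1 + Finsupp.single j 1 = p.1 + Finsupp.single j' 1 := congrArg Prod.fst h
  have h2 := add_left_cancel h1
  by_contra hne
  have h3 : Finsupp.single j 1 j = Finsupp.single j' 1 j := by rw [h2]
  rw [Finsupp.single_eq_same, Finsupp.single_eq_of_ne' (Ne.symm hne)] at h3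
  exact one_ne_zero h3

lemma expSet_disjoint_of_ne {p : ConeTriple N K} {π₁ π₂ : ConeTriple N K}
    (h1 : π₁ ∈ pieces p) (h2 : π₂ ∈ pieces p) (hne : π₁ ≠ π₂) :
    Disjoint (expSet π₁.1 π₁.2.1) (expSet π₂.1 π₂.2.1) := by
  have key : ∀ j j' : Fin N, j' < j → ∀ v,
      v ∈ expSet (pc p j).1 (pc p j).2.1 → v ∈ expSet (pc p j').1 (pc p j').2.1 → False := by
    intro j j' hlt v hv hv'
    have g1 := (mem_piece_gt hv').1
    have g2 := (mem_piece_gt hv).2 j' hlt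
    omega
  have base : ∀ j : Fin N, Disjoint (expSet p.1 (∅ : Finset (Fin N)))
      (expSet (pc p j).1 (pc p j).2.1) := by
    intro j
    rw [expSet_empty, Set.disjoint_left]
    rintro v rfl hv
    have := (mem_piece_gt hv).1
    omega
  rcases mem_pieces.1 h1 with rfl | ⟨j, hj, rfl⟩ <;> rcases mem_pieces.1 h2 with h2' | ⟨j', hj', h2'⟩
  · exact absurd h2'.symm hne
  · subst h2'; exact base j'
  · subst h2'; exact (base j).symm
  · subst h2'
    have hjj : j ≠ j' := fun h => hne (by rw [h])
    rcases hjj.lt_or_gt with h | h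
    · exact Set.disjoint_left.2 fun v hv hv' => key j' j h v hv' hv
    · exact Set.disjoint_left.2 fun v hv hv' => key j j' h v hv hv'

lemma mem_cone_of_mem_expSet {r : ConeTriple N K} {v : Fin N →₀ ℕ}
    (hv : v ∈ expSet r.1 r.2.1) : monomial v 1 * r.2.2 ∈ cone r := by
  obtain ⟨γ, hγ, rfl⟩ := hv
  exact Submodule.subset_span ⟨γ, hγ, rfl⟩

lemma cone_piece_le {p : ConeTriple N K} {π : ConeTriple N K} (hπ : π ∈ pieces p) :
    cone π ≤ cone p := by
  rw [cone_eq π, cone_eq p, pieces_h hπ]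
  apply Submodule.map_mono
  apply monSpan_mono
  rcases mem_pieces.1 hπ with rfl | ⟨j, hj, rfl⟩
  · rw [expSet_empty]
    rintro v rfl
    exact ⟨0, by simp, by simp⟩
  · exact expSet_piece_subset hj

lemma cone_eq_iSup_pieces (p : ConeTriple N K) :
    cone p = ⨆ π ∈ pieces p, cone π := by
  apply le_antisymm
  · rw [cone]
    rw [Submodule.span_le]
    rintro q ⟨γ, hγ, rfl⟩
    have hv : p.1 + γ ∈ expSet p.1 p.2.1 := ⟨γ, hγ, rfl⟩
    rw [expSet_eq_union] at hv
    rcases hv with hv | hv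
    · rw [hv]
      have hb : ((p.1, ∅, p.2.2) : ConeTriple N K) ∈ pieces p := mem_pieces.2 (Or.inl rfl)
      refine Submodule.mem_iSup_of_mem _ (Submodule.mem_iSup_of_mem hb ?_)
      have : (monomial p.1 1 : MvPolynomial (Fin N) K) * p.2.2 ∈
          cone ((p.1, ∅, p.2.2) : ConeTriple N K) :=
        mem_cone_of_mem_expSet (by rw [expSet_empty]; rfl)
      exact this
    · simp only [Set.mem_iUnion, exists_prop, Finset.mem_coe] at hv
      obtain ⟨j, hj, hv⟩ := hv
      have hb : pc p j ∈ pieces p := mem_pieces.2 (Or.inr ⟨j, hj, rfl⟩)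
      exact Submodule.mem_iSup_of_mem _ (Submodule.mem_iSup_of_mem hb
        (mem_cone_of_mem_expSet (r := pc p j) hv))
  · exact iSup₂_le fun π hπ => cone_piece_le hπ

lemma cone_disjoint_pieces {p : ConeTriple N K} (hh : p.2.2 ≠ 0) {π : ConeTriple N K}
    (hπ : π ∈ pieces p) :
    Disjoint (cone π) (⨆ π' ∈ (pieces p).erase π, cone π') := by
  have hle : (⨆ π' ∈ (pieces p).erase π, cone π') ≤
      Submodule.map (LinearMap.mulRight K p.2.2)
        (monSpan K (⋃ π' ∈ ((pieces p).erase π : Set (ConeTriple N K)),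
          expSet π'.1 π'.2.1)) := by
    refine iSup₂_le fun π' hπ' => ?_
    rw [cone_eq π', pieces_h (Finset.mem_of_mem_erase hπ')]
    apply Submodule.map_mono
    apply monSpan_mono
    exact Set.subset_biUnion_of_mem (u := fun r => expSet r.1 r.2.1) (Finset.mem_coe.2 hπ')
  refine Disjoint.mono_right hle ?_
  rw [cone_eq π, pieces_h hπ]
  apply disjoint_map_monSpan hh
  rw [Set.disjoint_iUnion₂_right]
  intro π' hπ'
  have hπ'p := Finset.mem_of_mem_erase (Finset.mem_coe.1 hπ')
  exact expSet_disjoint_of_ne hπ hπ'p (Finset.ne_of_mem_erase (Finset.mem_coe.1 hπ')).symm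

lemma cone_ne_bot {r : ConeTriple N K} (hh : r.2.2 ≠ 0) : cone r ≠ ⊥ := by
  intro hbot
  have hm : monomial r.1 1 * r.2.2 ∈ cone r :=
    mem_cone_of_mem_expSet ⟨0, by simp, by simp⟩
  rw [hbot, Submodule.mem_bot] at hm
  have h1 : (monomial r.1 1 : MvPolynomial (Fin N) K) ≠ 0 := by
    rw [Ne, MvPolynomial.monomial_eq_zero]
    exact one_ne_zero
  exact (mul_ne_zero h1 hh) hm

lemma coneDeg_base (p : ConeTriple N K) :
    coneDeg ((p.1, ∅, p.2.2) : ConeTriple N K) = coneDeg p := rfl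

lemma coneDeg_pc (p : ConeTriple N K) (j : Fin N) : coneDeg (pc p j) = coneDeg p + 1 := by
  have h2 : ∑ i : Fin N, Finsupp.single j 1 i = 1 := by
    rw [Finset.sum_eq_single j]
    · exact Finsupp.single_eq_same
    · intro b _ hb; exact Finsupp.single_eq_of_ne' (Ne.symm hb)
    · intro hj; exact absurd (Finset.mem_univ j) hj
  have h1 : ∑ i : Fin N, (pc p j).1 i = (∑ i, p.1 i) + 1 := by
    have hh : ∀ i : Fin N, (pc p j).1 i = p.1 i + Finsupp.single j 1 i := fun i =>
      Finsupp.add_apply _ _ _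
    rw [Finset.sum_congr rfl (fun i _ => hh i), Finset.sum_add_distrib, h2]
  show (∑ i, (pc p j).1 i) + (pc p j).2.2.totalDegree = _
  rw [h1]
  show (∑ i, p.1 i) + 1 + p.2.2.totalDegree = ((∑ i, p.1 i) + p.2.2.totalDegree) + 1
  omega

lemma card_pc_le (p : ConeTriple N K) (j : Fin N) : (pc p j).2.1.card ≤ p.2.1.card :=
  Finset.card_le_card (Finset.filter_subset _ _)

lemma pc_nonempty {p : ConeTriple N K} {j : Fin N} (hj : j ∈ p.2.1) :
    (pc p j).2.1.Nonempty :=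
  ⟨j, Finset.mem_filter.2 ⟨hj, le_refl j⟩⟩

lemma pieces_card_filter_le_one (p : ConeTriple N K) :
    ((pieces p).filter fun π => π.2.1.Nonempty ∧ π.2.1.card = p.2.1.card).card ≤ 1 := by
  rw [Finset.card_le_one]
  intro a ha b hb
  simp only [Finset.mem_filter] at ha hb
  obtain ⟨ha1, ha2, ha3⟩ := ha
  obtain ⟨hb1, hb2, hb3⟩ := hb
  have key : ∀ c, c ∈ pieces p → c.2.1.Nonempty → c.2.1.card = p.2.1.card →
      ∃ j ∈ p.2.1, c = pc p j ∧ ∀ i ∈ p.2.1, j ≤ i := by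
    intro c hc hc1 hc2
    rcases mem_pieces.1 hc with rfl | ⟨j, hj, rfl⟩
    · exact absurd hc1 (by simp)
    · refine ⟨j, hj, rfl, ?_⟩
      have : (pc p j).2.1 = p.2.1 :=
        Finset.eq_of_subset_of_card_le (Finset.filter_subset _ _) (le_of_eq hc2.symm)
      intro i hi
      rw [← this] at hi
      exact (Finset.mem_filter.1 hi).2
  obtain ⟨j, hj, rfl, hall⟩ := key a ha1 ha2 ha3
  obtain ⟨j', hj', rfl, hall'⟩ := key b hb1 hb2 hb3
  have : j = j' := le_antisymm (hall j' hj') (hall' j hj)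
  rw [this]

lemma biSup_cone_eq_sup (s : Finset (ConeTriple N K)) :
    (⨆ p ∈ s, cone p) = s.sup cone := (Finset.sup_eq_iSup s cone).symm

lemma refine_decomp {M : Submodule K (MvPolynomial (Fin N) K)} {𝒞 : Finset (ConeTriple N K)}
    (hdec : IsConeDecomp 𝒞 M) {q : ConeTriple N K} (hq : q ∈ 𝒞) :
    IsConeDecomp ((𝒞.erase q) ∪ pieces q) M := by
  obtain ⟨hHom, hle, hsup, hdisj⟩ := hdec
  have hq0 : q.2.2 ≠ 0 := (hHom q hq).1
  set A := 𝒞.erase q with hA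
  have hdq : Disjoint (cone q) (A.sup cone) := by
    rw [← biSup_cone_eq_sup]; exact hdisj q hq
  have hsupq : (pieces q).sup cone = cone q := by
    rw [← biSup_cone_eq_sup]; exact (cone_eq_iSup_pieces q).symm
  have hsupA : A.sup cone ⊔ cone q = 𝒞.sup cone := by
    rw [sup_comm, ← Finset.sup_insert, Finset.insert_erase hq]
  have hint : ∀ π ∈ pieces q, π ∉ A := by
    intro π hπ hπA
    have h1 : cone π ≤ cone q := cone_piece_le hπ
    have h2 : cone π ≤ A.sup cone := Finset.le_sup hπA
    have : cone π = ⊥ := by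
      have := hdq.mono h1 h2
      exact disjoint_self.1 this
    exact cone_ne_bot (by rw [pieces_h hπ]; exact hq0) this
  refine ⟨?_, ?_, ?_, ?_⟩
  · intro p hp
    rcases Finset.mem_union.1 hp with hp | hp
    · exact hHom p (Finset.mem_of_mem_erase hp)
    · rw [pieces_h hp]; exact hHom q hq
  · intro p hp
    rcases Finset.mem_union.1 hp with hp | hp
    · exact hle p (Finset.mem_of_mem_erase hp)
    · exact le_trans (cone_piece_le hp) (hle q hq)
  · rw [biSup_cone_eq_sup, Finset.sup_union, hsupq, hsupA, ← biSup_cone_eq_sup]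
    exact hsup
  · intro r hr
    rcases Finset.mem_union.1 hr with hr | hr
    · -- r ∈ A
      have hr𝒞 : r ∈ 𝒞 := Finset.mem_of_mem_erase hr
      have hrq : r ≠ q := Finset.ne_of_mem_erase hr
      have heq : (A ∪ pieces q).erase r = (A.erase r) ∪ pieces q := by
        rw [Finset.erase_union_distrib]
        congr 1
        apply Finset.erase_eq_of_notMem
        intro hmem
        exact hint r hmem hr
      rw [heq, biSup_cone_eq_sup, Finset.sup_union, hsupq]
      have : A.erase r = (𝒞.erase r).erase q := by
        rw [hA, Finset.erase_right_comm]
      rw [this]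
      have h2 : (((𝒞.erase r).erase q).sup cone) ⊔ cone q = (𝒞.erase r).sup cone := by
        rw [sup_comm, ← Finset.sup_insert,
          Finset.insert_erase (Finset.mem_erase.2 ⟨Ne.symm hrq, hq⟩)]
      rw [h2, ← biSup_cone_eq_sup]
      exact hdisj r hr𝒞
    · -- r ∈ pieces q
      have hrA : r ∉ A := hint r hr
      have heq : (A ∪ pieces q).erase r = A ∪ (pieces q).erase r := by
        rw [Finset.erase_union_distrib, Finset.erase_eq_of_notMem hrA]
      rw [heq, biSup_cone_eq_sup, Finset.sup_union]
      have hπsup : ((pieces q).erase r).sup cone ≤ cone q := by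
        apply Finset.sup_le
        intro π hπ
        exact cone_piece_le (Finset.mem_of_mem_erase hπ)
      have hdr : Disjoint (cone r) (((pieces q).erase r).sup cone) := by
        rw [← biSup_cone_eq_sup]; exact cone_disjoint_pieces hq0 hr
      rw [Submodule.disjoint_def]
      intro x hxr hxsup
      rw [sup_comm] at hxsup
      obtain ⟨a, ha, b, hb, hab⟩ := Submodule.mem_sup.1 hxsup
      -- a ∈ sup over pieces erase, b ∈ A.sup
      have hxq : x ∈ cone q := cone_piece_le hr hxr
      have haq : a ∈ cone q := hπsup ha
      have hbq : b ∈ cone q := by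
        have : b = x - a := by rw [← hab]; ring
        rw [this]
        exact Submodule.sub_mem _ hxq haq
      have hb0 : b = 0 := (Submodule.disjoint_def.1 hdq) b hbq hb
      have hxa : x = a := by rw [← hab, hb0, add_zero]
      rw [hxa]
      exact (Submodule.disjoint_def.1 hdr) a (hxa ▸ hxr) ha

lemma pieces_nonempty_struct {q π : ConeTriple N K} (hπ : π ∈ pieces q)
    (hne : π.2.1.Nonempty) : ∃ j ∈ q.2.1, π = pc q j := by
  rcases mem_pieces.1 hπ with rfl | ⟨j, hj, rfl⟩
  · exact absurd hne (by simp)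
  · exact ⟨j, hj, rfl⟩

lemma pc_min_full {q : ConeTriple N K} (hy : q.2.1.Nonempty) :
    (pc q (q.2.1.min' hy)).2.1 = q.2.1 :=
  Finset.filter_eq_self.2 fun i hi => Finset.min'_le _ i hi

lemma elim_level {M : Submodule K (MvPolynomial (Fin N) K)} (d : ℕ) :
    ∀ k : ℕ, ∀ 𝒞 : Finset (ConeTriple N K), ∀ e₀ : ℕ, ∀ phat : ConeTriple N K,
    IsConeDecomp 𝒞 M → IsStandardDecomp d 𝒞 →
    phat ∈ 𝒞 → phat.2.1.Nonempty → coneDeg phat = e₀ → d ≤ e₀ →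
    (∀ r ∈ 𝒞, r.2.1.Nonempty → e₀ ≤ coneDeg r → r.2.1.card ≤ phat.2.1.card) →
    (𝒞.filter fun r => r.2.1.Nonempty ∧ coneDeg r = e₀ ∧ r ≠ phat).card ≤ k →
    ∃ 𝒞' : Finset (ConeTriple N K),
      IsConeDecomp 𝒞' M ∧ IsStandardDecomp d 𝒞' ∧ phat ∈ 𝒞' ∧
      (∀ r ∈ 𝒞', r.2.1.Nonempty → coneDeg r = e₀ → r = phat) ∧
      (∀ r ∈ 𝒞', r.2.1.Nonempty → coneDeg r < e₀ → r ∈ 𝒞) ∧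
      (∀ r ∈ 𝒞', r.2.1.Nonempty → e₀ ≤ coneDeg r → r.2.1.card ≤ phat.2.1.card) ∧
      ((𝒞'.filter fun r =>
          r.2.1.Nonempty ∧ e₀ ≤ coneDeg r ∧ r.2.1.card = phat.2.1.card ∧ r ≠ phat).card
        ≤ (𝒞.filter fun r =>
          r.2.1.Nonempty ∧ e₀ ≤ coneDeg r ∧ r.2.1.card = phat.2.1.card ∧ r ≠ phat).card) ∧
      (∀ p ∈ 𝒞, ∃ q ∈ 𝒞', coneDeg p ≤ coneDeg q) := by
  intro k
  induction k with
  | zero =>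
    intro 𝒞 e₀ phat hdec hstd hp𝒞 hpne hpdeg hde hmax hcard
    refine ⟨𝒞, hdec, hstd, hp𝒞, ?_, fun r hr _ _ => hr, hmax, le_refl _,
      fun p hp => ⟨p, hp, le_refl _⟩⟩
    intro r hr hrne hrdeg
    by_contra hne
    have : r ∈ 𝒞.filter fun r => r.2.1.Nonempty ∧ coneDeg r = e₀ ∧ r ≠ phat :=
      Finset.mem_filter.2 ⟨hr, hrne, hrdeg, hne⟩
    rw [Nat.le_zero, Finset.card_eq_zero] at hcard
    rw [hcard] at this
    exact absurd this (Finset.notMem_empty r)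
  | succ k ih =>
    intro 𝒞 e₀ phat hdec hstd hp𝒞 hpne hpdeg hde hmax hcard
    by_cases hfe : (𝒞.filter fun r => r.2.1.Nonempty ∧ coneDeg r = e₀ ∧ r ≠ phat).Nonempty
    swap
    · -- filter empty: done already
      rw [Finset.not_nonempty_iff_eq_empty] at hfe
      refine ⟨𝒞, hdec, hstd, hp𝒞, ?_, fun r hr _ _ => hr, hmax, le_refl _,
        fun p hp => ⟨p, hp, le_refl _⟩⟩
      intro r hr hrne hrdeg
      by_contra hne
      have : r ∈ 𝒞.filter fun r => r.2.1.Nonempty ∧ coneDeg r = e₀ ∧ r ≠ phat :=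
        Finset.mem_filter.2 ⟨hr, hrne, hrdeg, hne⟩
      rw [hfe] at this
      exact absurd this (Finset.notMem_empty r)
    obtain ⟨q, hqf⟩ := hfe
    obtain ⟨hq𝒞, hqne, hqdeg, hqp⟩ := Finset.mem_filter.1 hqf
    set 𝒞₁ := (𝒞.erase q) ∪ pieces q with h𝒞₁
    have hdec₁ : IsConeDecomp 𝒞₁ M := refine_decomp hdec hq𝒞
    have hmem₁ : ∀ r ∈ 𝒞₁, (r ∈ 𝒞 ∧ r ≠ q) ∨ r ∈ pieces q := by
      intro r hr
      rcases Finset.mem_union.1 hr with hr | hr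
      · exact Or.inl ⟨Finset.mem_of_mem_erase hr, Finset.ne_of_mem_erase hr⟩
      · exact Or.inr hr
    have hpieceDeg : ∀ π ∈ pieces q, π.2.1.Nonempty → coneDeg π = e₀ + 1 := by
      intro π hπ hπne
      obtain ⟨j, hj, rfl⟩ := pieces_nonempty_struct hπ hπne
      rw [coneDeg_pc, hqdeg]
    have hpieceCard : ∀ π ∈ pieces q, π.2.1.Nonempty → π.2.1.card ≤ q.2.1.card := by
      intro π hπ hπne
      obtain ⟨j, hj, rfl⟩ := pieces_nonempty_struct hπ hπne
      exact card_pc_le q j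
    have hqcard : q.2.1.card ≤ phat.2.1.card := hmax q hq𝒞 hqne (le_of_eq hqdeg.symm)
    have hp𝒞₁ : phat ∈ 𝒞₁ := Finset.mem_union_left _ (Finset.mem_erase.2 ⟨Ne.symm hqp, hp𝒞⟩)
    -- standardness of 𝒞₁
    have hstd₁ : IsStandardDecomp d 𝒞₁ := by
      constructor
      · intro r hr hrne
        rcases hmem₁ r hr with ⟨hr𝒞, _⟩ | hrπ
        · exact hstd.1 r hr𝒞 hrne
        · rw [hpieceDeg r hrπ hrne]; omega
      · intro r hr hrne d' hdd' hd'r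
        -- helper: find a witness in 𝒞₁ given a witness requirement (m, d') with a 𝒞-witness
        have transfer : ∀ m : ℕ, ∀ s ∈ 𝒞, s.2.1.Nonempty → coneDeg s = d' → m ≤ s.2.1.card →
            ∃ t ∈ 𝒞₁, t.2.1.Nonempty ∧ coneDeg t = d' ∧ m ≤ t.2.1.card := by
          intro m s hs𝒞 hsne hsdeg hms
          by_cases hsq : s = q
          · subst hsq
            refine ⟨phat, hp𝒞₁, hpne, by rw [hpdeg, ← hqdeg, hsdeg], le_trans hms hqcard⟩
          · exact ⟨s, Finset.mem_union_left _ (Finset.mem_erase.2 ⟨hsq, hs𝒞⟩),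
              hsne, hsdeg, hms⟩
        rcases hmem₁ r hr with ⟨hr𝒞, _⟩ | hrπ
        · obtain ⟨s, hs𝒞, hsne, hsdeg, hscard⟩ := hstd.2 r hr𝒞 hrne d' hdd' hd'r
          exact transfer r.2.1.card s hs𝒞 hsne hsdeg hscard
        · have hrdeg : coneDeg r = e₀ + 1 := hpieceDeg r hrπ hrne
          have hrcard : r.2.1.card ≤ q.2.1.card := hpieceCard r hrπ hrne
          rcases Nat.lt_or_ge d' (e₀ + 1) with hlt | hge
          · -- d' ≤ e₀ : use old witness for q
            obtain ⟨s, hs𝒞, hsne, hsdeg, hscard⟩ := hstd.2 q hq𝒞 hqne d' hdd'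
              (by omega)
            exact transfer r.2.1.card s hs𝒞 hsne hsdeg (le_trans hrcard hscard)
          · -- d' = e₀ + 1 : use the full piece
            have hd'eq : d' = e₀ + 1 := by omega
            refine ⟨pc q (q.2.1.min' hqne), Finset.mem_union_right _
              (mem_pieces.2 (Or.inr ⟨_, q.2.1.min'_mem hqne, rfl⟩)), ?_, ?_, ?_⟩
            · exact pc_nonempty (q.2.1.min'_mem hqne)
            · rw [coneDeg_pc, hqdeg, hd'eq]
            · rw [hd'eq] at hd'r
              refine le_trans hrcard ?_
              rw [pc_min_full hqne]
    -- max-card bound for 𝒞₁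
    have hmax₁ : ∀ r ∈ 𝒞₁, r.2.1.Nonempty → e₀ ≤ coneDeg r → r.2.1.card ≤ phat.2.1.card := by
      intro r hr hrne hrdeg
      rcases hmem₁ r hr with ⟨hr𝒞, _⟩ | hrπ
      · exact hmax r hr𝒞 hrne hrdeg
      · exact le_trans (hpieceCard r hrπ hrne) hqcard
    -- level filter decreased
    have hlevel₁ : (𝒞₁.filter fun r => r.2.1.Nonempty ∧ coneDeg r = e₀ ∧ r ≠ phat).card ≤ k := by
      have hsub : (𝒞₁.filter fun r => r.2.1.Nonempty ∧ coneDeg r = e₀ ∧ r ≠ phat) ⊆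
          (𝒞.filter fun r => r.2.1.Nonempty ∧ coneDeg r = e₀ ∧ r ≠ phat).erase q := by
        intro r hr
        obtain ⟨hr𝒞₁, hrne, hrdeg, hrp⟩ := Finset.mem_filter.1 hr
        rcases hmem₁ r hr𝒞₁ with ⟨hr𝒞, hrq⟩ | hrπ
        · exact Finset.mem_erase.2 ⟨hrq, Finset.mem_filter.2 ⟨hr𝒞, hrne, hrdeg, hrp⟩⟩
        · exact absurd hrdeg (by rw [hpieceDeg r hrπ hrne]; omega)
      refine le_trans (Finset.card_le_card hsub) ?_
      rw [Finset.card_erase_of_mem hqf]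
      omega
    -- count of top-card cones not increased
    have hcnt₁ : (𝒞₁.filter fun r =>
          r.2.1.Nonempty ∧ e₀ ≤ coneDeg r ∧ r.2.1.card = phat.2.1.card ∧ r ≠ phat).card
        ≤ (𝒞.filter fun r =>
          r.2.1.Nonempty ∧ e₀ ≤ coneDeg r ∧ r.2.1.card = phat.2.1.card ∧ r ≠ phat).card := by
      set P : ConeTriple N K → Prop :=
        fun r => r.2.1.Nonempty ∧ e₀ ≤ coneDeg r ∧ r.2.1.card = phat.2.1.card ∧ r ≠ phat with hP
      by_cases hcq : q.2.1.card = phat.2.1.card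
      · have hqP : q ∈ 𝒞.filter P :=
          Finset.mem_filter.2 ⟨hq𝒞, hqne, le_of_eq hqdeg.symm, hcq, hqp⟩
        have hsub : 𝒞₁.filter P ⊆ ((𝒞.filter P).erase q) ∪
            ((pieces q).filter fun π => π.2.1.Nonempty ∧ π.2.1.card = q.2.1.card) := by
          intro r hr
          obtain ⟨hr𝒞₁, hrP⟩ := Finset.mem_filter.1 hr
          rcases hmem₁ r hr𝒞₁ with ⟨hr𝒞, hrq⟩ | hrπ
          · exact Finset.mem_union_left _
              (Finset.mem_erase.2 ⟨hrq, Finset.mem_filter.2 ⟨hr𝒞, hrP⟩⟩)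
          · refine Finset.mem_union_right _ (Finset.mem_filter.2 ⟨hrπ, hrP.1, ?_⟩)
            rw [hrP.2.2.1, hcq]
        refine le_trans (Finset.card_le_card hsub) (le_trans (Finset.card_union_le _ _) ?_)
        have h1 := pieces_card_filter_le_one q
        rw [Finset.card_erase_of_mem hqP]
        have h2 : 1 ≤ (𝒞.filter P).card := Finset.card_pos.2 ⟨q, hqP⟩
        set a := ((pieces q).filter fun π => π.2.1.Nonempty ∧ π.2.1.card = q.2.1.card).card
        set b := (𝒞.filter P).card
        omega
      · have hsub : 𝒞₁.filter P ⊆ 𝒞.filter P := by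
          intro r hr
          obtain ⟨hr𝒞₁, hrP⟩ := Finset.mem_filter.1 hr
          rcases hmem₁ r hr𝒞₁ with ⟨hr𝒞, _⟩ | hrπ
          · exact Finset.mem_filter.2 ⟨hr𝒞, hrP⟩
          · exfalso
            have := hpieceCard r hrπ hrP.1
            have := hrP.2.2.1
            omega
        exact Finset.card_le_card hsub
    -- recurse
    obtain ⟨𝒞', hdec', hstd', hp', hlev', hbelow', hmax', hcnt', hP5'⟩ :=
      ih 𝒞₁ e₀ phat hdec₁ hstd₁ hp𝒞₁ hpne hpdeg hde hmax₁ hlevel₁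
    refine ⟨𝒞', hdec', hstd', hp', hlev', ?_, hmax', le_trans hcnt' hcnt₁, ?_⟩
    · intro r hr hrne hrdeg
      have hr𝒞₁ : r ∈ 𝒞₁ := hbelow' r hr hrne hrdeg
      rcases hmem₁ r hr𝒞₁ with ⟨hr𝒞, _⟩ | hrπ
      · exact hr𝒞
      · exfalso
        rw [hpieceDeg r hrπ hrne] at hrdeg
        omega
    · intro p hp
      by_cases hpq : p = q
      · subst hpq
        have hbase : ((p.1, ∅, p.2.2) : ConeTriple N K) ∈ 𝒞₁ :=
          Finset.mem_union_right _ (mem_pieces.2 (Or.inl rfl))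
        obtain ⟨t, ht, hdegt⟩ := hP5' _ hbase
        exact ⟨t, ht, le_trans (le_of_eq (coneDeg_base p).symm) hdegt⟩
      · have : p ∈ 𝒞₁ := Finset.mem_union_left _ (Finset.mem_erase.2 ⟨hpq, hp⟩)
        exact hP5' p this

lemma main_ind {M : Submodule K (MvPolynomial (Fin N) K)} (d : ℕ) :
    ∀ m : ℕ, ∀ c : ℕ, ∀ e : ℕ, ∀ 𝒞 : Finset (ConeTriple N K),
    IsConeDecomp 𝒞 M → IsStandardDecomp d 𝒞 →
    (∀ p ∈ 𝒞, ∀ q ∈ 𝒞, p.2.1.Nonempty → q.2.1.Nonempty → coneDeg p = coneDeg q →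
      coneDeg p < e → p = q) →
    (∀ p ∈ 𝒞, p.2.1.Nonempty → e ≤ coneDeg p → p.2.1.card ≤ m) →
    ((𝒞.filter fun p => p.2.1.Nonempty ∧ e ≤ coneDeg p ∧ p.2.1.card = m).card ≤ c) →
    ∃ 𝒟' : Finset (ConeTriple N K),
      IsConeDecomp 𝒟' M ∧ IsStandardDecomp d 𝒟' ∧ IsExactDecomp 𝒟' ∧
      ∀ p ∈ 𝒞, ∃ q ∈ 𝒟', coneDeg p ≤ coneDeg q := by
  intro m
  induction m using Nat.strong_induction_on with
  | _ m ihm =>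
  intro c
  induction c using Nat.strong_induction_on with
  | _ c ihc =>
  intro e 𝒞 hdec hstd hexact hbound hcount
  by_cases hex : ∀ p ∈ 𝒞, ∀ q ∈ 𝒞, p.2.1.Nonempty → q.2.1.Nonempty →
      coneDeg p = coneDeg q → p = q
  · exact ⟨𝒞, hdec, hstd, ⟨⟨d, hstd⟩, hex⟩, fun p hp => ⟨p, hp, le_refl _⟩⟩
  push_neg at hex
  obtain ⟨p₀, hp₀, q₀, hq₀, hp₀ne, hq₀ne, hdeg₀, hne₀⟩ := hex
  set S : Set ℕ := {n | ∃ p ∈ 𝒞, ∃ q ∈ 𝒞, p.2.1.Nonempty ∧ q.2.1.Nonempty ∧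
    p ≠ q ∧ coneDeg p = n ∧ coneDeg q = n} with hS
  have hSne : S.Nonempty :=
    ⟨coneDeg p₀, p₀, hp₀, q₀, hq₀, hp₀ne, hq₀ne, hne₀, rfl, hdeg₀.symm⟩
  set e₀ := sInf S with he₀
  obtain ⟨pa, hpa, qa, hqa, hpane, hqane, hpqa, hpadeg, hqadeg⟩ := Nat.sInf_mem hSne
  have he₀e : e ≤ e₀ := by
    by_contra hlt
    push_neg at hlt
    refine hpqa (hexact pa hpa qa hqa hpane hqane (by rw [hpadeg, hqadeg]) ?_)
    rw [hpadeg]; omega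
  have hde₀ : d ≤ e₀ := by
    have := hstd.1 pa hpa hpane
    omega
  set A := 𝒞.filter (fun p => p.2.1.Nonempty ∧ coneDeg p = e₀) with hA
  have hAne : A.Nonempty := ⟨pa, Finset.mem_filter.2 ⟨hpa, hpane, hpadeg⟩⟩
  obtain ⟨phat, hphatA, hphatmax⟩ := A.exists_max_image (fun p => p.2.1.card) hAne
  obtain ⟨hphat𝒞, hphatne, hphatdeg⟩ := Finset.mem_filter.1 hphatA
  have hmax : ∀ r ∈ 𝒞, r.2.1.Nonempty → e₀ ≤ coneDeg r → r.2.1.card ≤ phat.2.1.card := by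
    intro r hr hrne hrdeg
    obtain ⟨s, hs, hsne, hsdeg, hscard⟩ := hstd.2 r hr hrne e₀ hde₀ hrdeg
    exact le_trans hscard (hphatmax s (Finset.mem_filter.2 ⟨hs, hsne, hsdeg⟩))
  obtain ⟨𝒞', hdec', hstd', hphat', hlev', hbelow', hmax', hcnt', hP5'⟩ :=
    elim_level d ((𝒞.filter fun r => r.2.1.Nonempty ∧ coneDeg r = e₀ ∧ r ≠ phat).card)
      𝒞 e₀ phat hdec hstd hphat𝒞 hphatne hphatdeg hde₀ hmax (le_refl _)
  have hexact' : ∀ p ∈ 𝒞', ∀ q ∈ 𝒞', p.2.1.Nonempty → q.2.1.Nonempty →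
      coneDeg p = coneDeg q → coneDeg p < e₀ + 1 → p = q := by
    intro p hp q hq hpne hqne hdeq hlt
    rcases Nat.lt_or_ge (coneDeg p) e₀ with h | h
    · have hp𝒞 := hbelow' p hp hpne h
      have hq𝒞 := hbelow' q hq hqne (hdeq ▸ h)
      by_contra hne
      have hmem : coneDeg p ∈ S := ⟨p, hp𝒞, q, hq𝒞, hpne, hqne, hne, rfl, hdeq.symm⟩
      have := Nat.sInf_le hmem
      omega
    · have hpe : coneDeg p = e₀ := by omega
      have hqe : coneDeg q = e₀ := by omega
      rw [hlev' p hp hpne hpe, hlev' q hq hqne hqe]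
  have hboundm : phat.2.1.card ≤ m := hbound phat hphat𝒞 hphatne (by omega)
  have hcompose : (∃ 𝒟' : Finset (ConeTriple N K),
      IsConeDecomp 𝒟' M ∧ IsStandardDecomp d 𝒟' ∧ IsExactDecomp 𝒟' ∧
      ∀ p ∈ 𝒞', ∃ q ∈ 𝒟', coneDeg p ≤ coneDeg q) →
      (∃ 𝒟' : Finset (ConeTriple N K),
      IsConeDecomp 𝒟' M ∧ IsStandardDecomp d 𝒟' ∧ IsExactDecomp 𝒟' ∧
      ∀ p ∈ 𝒞, ∃ q ∈ 𝒟', coneDeg p ≤ coneDeg q) := by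
    rintro ⟨𝒟', h1, h2, h3, h4⟩
    refine ⟨𝒟', h1, h2, h3, fun p hp => ?_⟩
    obtain ⟨q1, hq1, hle1⟩ := hP5' p hp
    obtain ⟨q2, hq2, hle2⟩ := h4 q1 hq1
    exact ⟨q2, hq2, le_trans hle1 hle2⟩
  rcases eq_or_lt_of_le hboundm with hm | hm
  · -- top-card case : count strictly decreases
    have hc1 : 1 ≤ c := by
      refine le_trans ?_ hcount
      rw [Nat.one_le_iff_ne_zero, Ne, Finset.card_eq_zero, ← Ne,
        ← Finset.nonempty_iff_ne_empty]
      exact ⟨phat, Finset.mem_filter.2 ⟨hphat𝒞, hphatne, by omega, hm⟩⟩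
    have hnewcount : (𝒞'.filter fun p =>
        p.2.1.Nonempty ∧ e₀ + 1 ≤ coneDeg p ∧ p.2.1.card = m).card ≤ c - 1 := by
      have hsub1 : (𝒞'.filter fun p =>
          p.2.1.Nonempty ∧ e₀ + 1 ≤ coneDeg p ∧ p.2.1.card = m) ⊆
          (𝒞'.filter fun r =>
          r.2.1.Nonempty ∧ e₀ ≤ coneDeg r ∧ r.2.1.card = phat.2.1.card ∧ r ≠ phat) := by
        intro r hr
        obtain ⟨hr', hrne, hrdeg, hrcard⟩ := Finset.mem_filter.1 hr
        refine Finset.mem_filter.2 ⟨hr', hrne, by omega, by omega, ?_⟩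
        intro hrp
        rw [hrp] at hrdeg
        omega
      have hsub2 : (𝒞.filter fun r =>
          r.2.1.Nonempty ∧ e₀ ≤ coneDeg r ∧ r.2.1.card = phat.2.1.card ∧ r ≠ phat) ⊆
          (𝒞.filter fun p =>
          p.2.1.Nonempty ∧ e ≤ coneDeg p ∧ p.2.1.card = m).erase phat := by
        intro r hr
        obtain ⟨hr𝒞, hrne, hrdeg, hrcard, hrp⟩ := Finset.mem_filter.1 hr
        exact Finset.mem_erase.2 ⟨hrp, Finset.mem_filter.2 ⟨hr𝒞, hrne, by omega, by omega⟩⟩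
      have hphatmem : phat ∈ 𝒞.filter fun p =>
          p.2.1.Nonempty ∧ e ≤ coneDeg p ∧ p.2.1.card = m :=
        Finset.mem_filter.2 ⟨hphat𝒞, hphatne, by omega, hm⟩
      have h3 := Finset.card_le_card hsub2
      rw [Finset.card_erase_of_mem hphatmem] at h3
      have h4 := Finset.card_le_card hsub1
      omega
    apply hcompose
    exact ihc (c - 1) (by omega) (e₀ + 1) 𝒞' hdec' hstd' hexact'
      (fun p hp hpne hpdeg => by rw [← hm]; exact hmax' p hp hpne (by omega)) hnewcount
  · -- max card drops
    apply hcompose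
    exact ihm phat.2.1.card hm 𝒞'.card (e₀ + 1) 𝒞' hdec' hstd' hexact'
      (fun p hp hpne hpdeg => hmax' p hp hpne (by omega))
      (Finset.card_filter_le _ _)

end Aux


theorem exists_exact_standard_decomposition {K : Type*} [Field K]
    {N : ℕ} (hN : 1 ≤ N) (M : Submodule K (MvPolynomial (Fin N) K))
    (hM : IsHomogeneousSubspace M)
    (d : ℕ) (𝒟 : Finset (ConeTriple N K))
    (hdec : IsConeDecomp 𝒟 M) (hstd : IsStandardDecomp d 𝒟) :
    ∃ 𝒟' : Finset (ConeTriple N K),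
      IsConeDecomp 𝒟' M ∧ IsStandardDecomp d 𝒟' ∧ IsExactDecomp 𝒟' ∧
      ∀ p ∈ 𝒟, coneDeg p < macaulay 𝒟' 0 := by
  have hexact0 : ∀ p ∈ 𝒟, ∀ q ∈ 𝒟, p.2.1.Nonempty → q.2.1.Nonempty →
      coneDeg p = coneDeg q → coneDeg p < d → p = q := by
    intro p hp q hq hpne _ _ hlt
    exact absurd (hstd.1 p hp hpne) (by omega)
  have hboundN : ∀ p ∈ 𝒟, p.2.1.Nonempty → d ≤ coneDeg p → p.2.1.card ≤ N := by
    intro p _ _ _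
    refine le_trans (Finset.card_le_univ _) ?_
    simp
  obtain ⟨𝒟', hdec', hstd', hex', hP5⟩ := main_ind d N 𝒟.card d 𝒟 hdec hstd hexact0 hboundN
    (Finset.card_filter_le _ _)
  refine ⟨𝒟', hdec', hstd', hex', ?_⟩
  intro p hp
  obtain ⟨q, hq, hpq⟩ := hP5 p hp
  have hqmem : q ∈ 𝒟'.filter fun r => 0 ≤ r.2.1.card :=
    Finset.mem_filter.2 ⟨hq, Nat.zero_le _⟩
  have hne : (𝒟'.filter fun r => 0 ≤ r.2.1.card).Nonempty := ⟨q, hqmem⟩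
  have hsup : coneDeg q ≤ (𝒟'.filter fun r => 0 ≤ r.2.1.card).sup coneDeg :=
    Finset.le_sup hqmem
  rw [macaulay, if_pos hne]
  have : coneDeg p < 1 + (𝒟'.filter fun r => 0 ≤ r.2.1.card).sup coneDeg := by omega
  exact lt_of_lt_of_le this (le_max_right _ _)
end
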